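/- arXiv:2501.05049 — 9 statements merged into one kernel-verified Lean document; each statement's English description precedes it below -/
import Mathlib

section
/- Let G be a finite simple graph and let n ≥ 1 be the number of vertices of its line graph L(G) (i.e., n = |E(G)|). Then boxi(L(G)) ≤ ⌈5 log₂ n⌉. -/
/-- An assignment of axis-parallel boxes in `ℝ^d` (given coordinate-wise, as `d` nonempty closed
intervals per vertex) representing the graph `G`: two distinct vertices are adjacent iff their
boxes intersect, i.e. iff the intervals intersect in every coordinate. -/
def SimpleGraph.IsBoxRep {V : Type*} (G : SimpleGraph V) (d : ℕ) (I : V → Fin d → Set ℝ) : Prop :=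
  (∀ v i, ∃ a b : ℝ, a ≤ b ∧ I v i = Set.Icc a b) ∧
  ∀ u v : V, u ≠ v → (G.Adj u v ↔ ∀ i, (I u i ∩ I v i).Nonempty)

/-- The boxicity of a graph: the least dimension `d` such that `G` has a representation by
axis-parallel boxes in `ℝ^d`. -/
noncomputable def SimpleGraph.boxicity {V : Type*} (G : SimpleGraph V) : ℕ :=
  sInf {d : ℕ | ∃ I : V → Fin d → Set ℝ, G.IsBoxRep d I}

/-- `G` is an interval graph: its vertices can be assigned nonempty closed real intervals so that
two distinct vertices are adjacent iff their intervals intersect. -/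
def SimpleGraph.IsIntervalGraph {V : Type*} (G : SimpleGraph V) : Prop :=
  ∃ I : V → Set ℝ, (∀ v, ∃ a b : ℝ, a ≤ b ∧ I v = Set.Icc a b) ∧
    ∀ u v : V, u ≠ v → (G.Adj u v ↔ (I u ∩ I v).Nonempty)

/-- An interval-order graph is the complement of an interval graph. -/
def SimpleGraph.IsIntervalOrderGraph {V : Type*} (G : SimpleGraph V) : Prop :=
  Gᶜ.IsIntervalGraph


namespace BoxAux

def bad4 (x y z w : ℕ) : Prop := ¬(max x y < min z w ∨ max z w < min x y)

instance (x y z w : ℕ) : Decidable (bad4 x y z w) := by unfold bad4; infer_instance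

def bSlice : Fin 8 → ℕ := ![372, 378, 382, 384, 384, 382, 378, 372]

set_option maxRecDepth 10000 in
lemma card_bSlice (x : Fin 8) :
    Fintype.card {t : Fin 8 × Fin 8 × Fin 8 // bad4 x.val t.1.val t.2.1.val t.2.2.val}
      = bSlice x := by
  fin_cases x <;> decide

def quadEquiv : {q : Fin 8 × Fin 8 × Fin 8 × Fin 8 //
      bad4 q.1.val q.2.1.val q.2.2.1.val q.2.2.2.val} ≃
    Σ x : Fin 8, {t : Fin 8 × Fin 8 × Fin 8 // bad4 x.val t.1.val t.2.1.val t.2.2.val} where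
  toFun q := ⟨q.1.1, ⟨q.1.2, q.2⟩⟩
  invFun s := ⟨(s.1, s.2.1), s.2.2⟩
  left_inv _ := rfl
  right_inv _ := rfl

lemma card_bad : Fintype.card {q : Fin 8 × Fin 8 × Fin 8 × Fin 8 //
    bad4 q.1.val q.2.1.val q.2.2.1.val q.2.2.2.val} = 3032 := by
  rw [Fintype.card_congr quadEquiv, Fintype.card_sigma]
  simp only [card_bSlice]
  decide

variable {V : Type*}

def lo (h : V → Fin 8) (e : Sym2 V) : ℕ :=
  Sym2.lift ⟨fun u v => min (h u).val (h v).val, fun _ _ => min_comm _ _⟩ e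

def hi (h : V → Fin 8) (e : Sym2 V) : ℕ :=
  Sym2.lift ⟨fun u v => max (h u).val (h v).val, fun _ _ => max_comm _ _⟩ e

def Sep (h : V → Fin 8) (e f : Sym2 V) : Prop := hi h e < lo h f ∨ hi h f < lo h e

lemma not_sep_iff (h : V → Fin 8) (u v x y : V) :
    ¬ Sep h s(u,v) s(x,y) ↔ bad4 (h u).val (h v).val (h x).val (h y).val := Iff.rfl

open Finset in
lemma count_bad_single [Fintype V] [DecidableEq V]
    {u v x y : V} (huv : u ≠ v) (hux : u ≠ x) (huy : u ≠ y) (hvx : v ≠ x)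
    (hvy : v ≠ y) (hxy : x ≠ y) :
    Fintype.card {h : V → Fin 8 // bad4 (h u).val (h v).val (h x).val (h y).val}
      ≤ 3032 * 8 ^ (Fintype.card V - 4) := by
  classical
  set F : Finset V := {u, v, x, y} with hF
  have hFcard : F.card = 4 := by
    rw [hF, Finset.card_insert_of_notMem (by simp [huv, hux, huy]),
      Finset.card_insert_of_notMem (by simp [hvx, hvy]),
      Finset.card_insert_of_notMem (by simp [hxy]), Finset.card_singleton]
  have hinj : Function.Injective
      (fun h : {h : V → Fin 8 // bad4 (h u).val (h v).val (h x).val (h y).val} =>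
        ((⟨(h.1 u, h.1 v, h.1 x, h.1 y), h.2⟩ :
          {q : Fin 8 × Fin 8 × Fin 8 × Fin 8 //
            bad4 q.1.val q.2.1.val q.2.2.1.val q.2.2.2.val}),
         (fun w : {w : V // w ∉ F} => h.1 w.1))) := by
    intro h h' hh
    rw [Prod.mk.injEq, Subtype.mk.injEq, Prod.mk.injEq, Prod.mk.injEq, Prod.mk.injEq] at hh
    obtain ⟨⟨h1, h2, h3, h4⟩, h5⟩ := hh
    apply Subtype.ext
    funext w
    by_cases hw : w ∈ F
    · rw [hF] at hw
      simp only [Finset.mem_insert, Finset.mem_singleton] at hw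
      rcases hw with rfl | rfl | rfl | rfl <;> assumption
    · exact congrFun h5 ⟨w, hw⟩
  calc Fintype.card {h : V → Fin 8 // bad4 (h u).val (h v).val (h x).val (h y).val}
      ≤ Fintype.card ({q : Fin 8 × Fin 8 × Fin 8 × Fin 8 //
            bad4 q.1.val q.2.1.val q.2.2.1.val q.2.2.2.val} × ({w : V // w ∉ F} → Fin 8)) :=
        Fintype.card_le_of_injective _ hinj
    _ = 3032 * 8 ^ (Fintype.card V - 4) := by
        rw [Fintype.card_prod, card_bad, Fintype.card_fun]
        congr 2
        rw [Fintype.card_subtype_compl, Fintype.card_coe, hFcard]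

open Finset in
lemma count_bad_all [Fintype V] [DecidableEq V] (d : ℕ)
    {u v x y : V} (huv : u ≠ v) (hux : u ≠ x) (huy : u ≠ y) (hvx : v ≠ x)
    (hvy : v ≠ y) (hxy : x ≠ y) :
    Fintype.card {g : Fin d → V → Fin 8 // ∀ t,
        bad4 (g t u).val (g t v).val (g t x).val (g t y).val}
      ≤ (3032 * 8 ^ (Fintype.card V - 4)) ^ d := by
  classical
  have eqv : {g : Fin d → V → Fin 8 // ∀ t,
        bad4 (g t u).val (g t v).val (g t x).val (g t y).val} ≃
      (Fin d → {h : V → Fin 8 // bad4 (h u).val (h v).val (h x).val (h y).val}) :=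
    Equiv.subtypePiEquivPi (β := fun _ : Fin d => V → Fin 8)
      (p := fun _ h => bad4 (h u).val (h v).val (h x).val (h y).val)
  rw [Fintype.card_congr eqv, Fintype.card_pi]
  calc ∏ _t : Fin d, Fintype.card {h : V → Fin 8 //
          bad4 (h u).val (h v).val (h x).val (h y).val}
      ≤ ∏ _t : Fin d, (3032 * 8 ^ (Fintype.card V - 4)) :=
        Finset.prod_le_prod (fun _ _ => Nat.zero_le _)
          (fun _ _ => count_bad_single huv hux huy hvx hvy hxy)
    _ = (3032 * 8 ^ (Fintype.card V - 4)) ^ d := by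
        rw [Finset.prod_const, Finset.card_univ, Fintype.card_fin]

lemma pow_pow_comm (a d m : ℕ) : (a ^ d) ^ m = (a ^ m) ^ d := by
  rw [← pow_mul, mul_comm, pow_mul]

lemma arith (n d N : ℕ) (hd : 1 ≤ d) (hN : 4 ≤ N) (h : n ^ 5 ≤ 2 ^ d) :
    n ^ 2 * (3032 * 8 ^ (N - 4)) ^ d < (8 ^ N) ^ d := by
  have h8 : (8 : ℕ) ^ N = 4096 * 8 ^ (N - 4) := by
    have hN' : N = 4 + (N - 4) := by omega
    rw [hN', pow_add]
    norm_num
  have main : n ^ 2 * 3032 ^ d < 4096 ^ d := by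
    have h5 : (n ^ 2 * 3032 ^ d) ^ 5 < ((4096 : ℕ) ^ d) ^ 5 := by
      rw [mul_pow, pow_pow_comm 3032 d 5, pow_pow_comm 4096 d 5,
        show ((n : ℕ) ^ 2) ^ 5 = (n ^ 5) ^ 2 by ring,
        show ((4096 : ℕ) ^ 5) = 2 ^ 60 by norm_num]
      calc (n ^ 5) ^ 2 * (3032 ^ 5) ^ d
          ≤ (2 ^ d) ^ 2 * (3032 ^ 5) ^ d :=
            Nat.mul_le_mul_right _ (Nat.pow_le_pow_left h 2)
        _ = (2 ^ 2 * 3032 ^ 5) ^ d := by rw [pow_pow_comm 2 d 2, ← mul_pow]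
        _ < (2 ^ 60) ^ d := Nat.pow_lt_pow_left (by norm_num) (by omega)
    exact lt_of_pow_lt_pow_left₀ 5 (Nat.zero_le _) h5
  calc n ^ 2 * (3032 * 8 ^ (N - 4)) ^ d = (n ^ 2 * 3032 ^ d) * (8 ^ (N - 4)) ^ d := by
        rw [mul_pow]; ring
    _ < 4096 ^ d * (8 ^ (N - 4)) ^ d := by
        have hpos : 0 < ((8 : ℕ) ^ (N - 4)) ^ d := by positivity
        exact mul_lt_mul_of_pos_right main hpos
    _ = (8 ^ N) ^ d := by rw [h8, mul_pow]

@[simp] lemma lo_mk (h : V → Fin 8) (u v : V) : lo h s(u, v) = min (h u).val (h v).val := rfl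
@[simp] lemma hi_mk (h : V → Fin 8) (u v : V) : hi h s(u, v) = max (h u).val (h v).val := rfl

lemma lo_le_hi (h : V → Fin 8) (e : Sym2 V) : lo h e ≤ hi h e := by
  induction e using Sym2.ind with
  | _ u v => simp [min_le_iff, le_max_iff]

lemma lo_le_of_mem (h : V → Fin 8) {w : V} {e : Sym2 V} (hw : w ∈ e) : lo h e ≤ (h w).val := by
  induction e using Sym2.ind with
  | _ u v =>
    rcases Sym2.mem_iff.1 hw with rfl | rfl
    · simp [min_le_iff]
    · simp [min_le_iff]

lemma le_hi_of_mem (h : V → Fin 8) {w : V} {e : Sym2 V} (hw : w ∈ e) : (h w).val ≤ hi h e := by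
  induction e using Sym2.ind with
  | _ u v =>
    rcases Sym2.mem_iff.1 hw with rfl | rfl
    · simp [le_max_iff]
    · simp [le_max_iff]

theorem isBoxRep_of (G : SimpleGraph V) (d : ℕ) (g : Fin d → V → Fin 8)
    (hsep : ∀ e f : G.edgeSet, e ≠ f → ¬ G.lineGraph.Adj e f → ∃ t, Sep (g t) e f) :
    G.lineGraph.IsBoxRep d
      (fun e t => Set.Icc ((lo (g t) e : ℝ)) ((hi (g t) e : ℝ))) := by
  constructor
  · intro e t
    exact ⟨_, _, by exact_mod_cast lo_le_hi (g t) e, rfl⟩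
  · intro e f hne
    constructor
    · intro hadj t
      obtain ⟨w, hw⟩ := hadj.2
      refine ⟨((g t w).val : ℝ), ?_, ?_⟩ <;> rw [Set.mem_Icc] <;>
        constructor <;> rw [Nat.cast_le]
      · exact lo_le_of_mem _ hw.1
      · exact le_hi_of_mem _ hw.1
      · exact lo_le_of_mem _ hw.2
      · exact le_hi_of_mem _ hw.2
    · intro hall
      by_contra hadj
      obtain ⟨t, ht⟩ := hsep e f hne hadj
      obtain ⟨x, hx1, hx2⟩ := hall t
      rw [Set.mem_Icc] at hx1 hx2
      rcases ht with ht | ht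
      · have : (hi (g t) e : ℝ) < (lo (g t) f : ℝ) := by exact_mod_cast ht
        linarith [hx1.2, hx2.1]
      · have : (hi (g t) f : ℝ) < (lo (g t) e : ℝ) := by exact_mod_cast ht
        linarith [hx1.1, hx2.2]


lemma four_distinct {G : SimpleGraph V} (e f : G.edgeSet) (hne : e ≠ f)
    (hadj : ¬ G.lineGraph.Adj e f) :
    ∃ u v x y : V, (e : Sym2 V) = s(u,v) ∧ (f : Sym2 V) = s(x,y) ∧ u ≠ v ∧ u ≠ x ∧
      u ≠ y ∧ v ≠ x ∧ v ≠ y ∧ x ≠ y := by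
  obtain ⟨⟨u, v⟩, hu⟩ := Quot.exists_rep (e : Sym2 V)
  obtain ⟨⟨x, y⟩, hx⟩ := Quot.exists_rep (f : Sym2 V)
  have he : (e : Sym2 V) = s(u, v) := hu.symm
  have hf : (f : Sym2 V) = s(x, y) := hx.symm
  have hdisj : ∀ w : V, w ∈ (e : Sym2 V) → w ∈ (f : Sym2 V) → False := fun w hw1 hw2 =>
    hadj (SimpleGraph.lineGraph_adj_iff_exists.2 ⟨hne, w, hw1, hw2⟩)
  have he' := e.prop
  rw [he, SimpleGraph.mem_edgeSet] at he'
  have hf' := f.prop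
  rw [hf, SimpleGraph.mem_edgeSet] at hf'
  have huv : u ≠ v := G.ne_of_adj he'
  have hxy : x ≠ y := G.ne_of_adj hf' 
  refine ⟨u, v, x, y, he, hf, huv, ?_, ?_, ?_, ?_, hxy⟩
  · rintro rfl
    exact hdisj u (he ▸ Sym2.mem_mk_left u v) (hf ▸ Sym2.mem_mk_left u y)
  · rintro rfl
    exact hdisj u (he ▸ Sym2.mem_mk_left u v) (hf ▸ Sym2.mem_mk_right x u)
  · rintro rfl
    exact hdisj v (he ▸ Sym2.mem_mk_right u v) (hf ▸ Sym2.mem_mk_left v y)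
  · rintro rfl
    exact hdisj v (he ▸ Sym2.mem_mk_right u v) (hf ▸ Sym2.mem_mk_right x v)

set_option maxHeartbeats 1000000 in
lemma exists_good_keys [Fintype V] (G : SimpleGraph V) (n d : ℕ)
    (hn : G.edgeSet.ncard = n) (hd : 1 ≤ d) (hnd : n ^ 5 ≤ 2 ^ d) :
    ∃ g : Fin d → V → Fin 8, ∀ e f : G.edgeSet, e ≠ f → ¬ G.lineGraph.Adj e f →
      ∃ t, Sep (g t) (e : Sym2 V) (f : Sym2 V) := by
  classical
  rcases em (∃ e f : G.edgeSet, e ≠ f ∧ ¬ G.lineGraph.Adj e f) with hP | hP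
  swap
  · exact ⟨fun _ _ => 0, fun e f hne hadj => absurd ⟨e, f, hne, hadj⟩ hP⟩
  obtain ⟨e₀, f₀, hne₀, hadj₀⟩ := hP
  letI : Fintype ↥G.edgeSet := Fintype.ofFinite _
  set N := Fintype.card V with hNdef
  have hcardE : Fintype.card ↥G.edgeSet = n := by
    rw [← Nat.card_eq_fintype_card, Nat.card_coe_set_eq, hn]
  have hN4 : 4 ≤ N := by
    obtain ⟨u, v, x, y, _, _, huv, hux, huy, hvx, hvy, hxy⟩ :=
      four_distinct e₀ f₀ hne₀ hadj₀
    have hc : ({u, v, x, y} : Finset V).card = 4 := by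
      rw [Finset.card_insert_of_notMem (by simp [huv, hux, huy]),
        Finset.card_insert_of_notMem (by simp [hvx, hvy]),
        Finset.card_insert_of_notMem (by simp [hxy]), Finset.card_singleton]
    calc 4 = ({u, v, x, y} : Finset V).card := hc.symm
      _ ≤ (Finset.univ : Finset V).card := Finset.card_le_univ _
      _ = N := Finset.card_univ
  by_contra hno
  push_neg at hno
  set P : Finset (↥G.edgeSet × ↥G.edgeSet) :=
    Finset.univ.filter (fun p => p.1 ≠ p.2 ∧ ¬ G.lineGraph.Adj p.1 p.2) with hPdef
  have hcover : (Finset.univ : Finset (Fin d → V → Fin 8)) ⊆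
      P.biUnion (fun p => Finset.univ.filter
        (fun g : Fin d → V → Fin 8 =>
          ∀ t, ¬ Sep (g t) (p.1 : Sym2 V) (p.2 : Sym2 V))) := by
    intro g _
    obtain ⟨e, f, hne, hadj, hbad⟩ := hno g
    refine Finset.mem_biUnion.2 ⟨(e, f), ?_, ?_⟩
    · rw [hPdef, Finset.mem_filter]
      exact ⟨Finset.mem_univ _, hne, hadj⟩
    · rw [Finset.mem_filter]
      exact ⟨Finset.mem_univ _, hbad⟩
  have hbound : ∀ p ∈ P, (Finset.univ.filter
      (fun g : Fin d → V → Fin 8 => ∀ t, ¬ Sep (g t) (p.1 : Sym2 V) (p.2 : Sym2 V))).card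
        ≤ (3032 * 8 ^ (N - 4)) ^ d := by
    intro p hp
    rw [hPdef, Finset.mem_filter] at hp
    obtain ⟨u, v, x, y, he, hf, huv, hux, huy, hvx, hvy, hxy⟩ :=
      four_distinct p.1 p.2 hp.2.1 hp.2.2
    calc (Finset.univ.filter
        (fun g : Fin d → V → Fin 8 => ∀ t, ¬ Sep (g t) (p.1 : Sym2 V) (p.2 : Sym2 V))).card
        = Fintype.card {g : Fin d → V → Fin 8 //
            ∀ t, ¬ Sep (g t) (p.1 : Sym2 V) (p.2 : Sym2 V)} :=
          (Fintype.card_subtype _).symm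
      _ = Fintype.card {g : Fin d → V → Fin 8 //
            ∀ t, bad4 (g t u).val (g t v).val (g t x).val (g t y).val} := by
          refine Fintype.card_congr (Equiv.subtypeEquivRight fun g => ?_)
          refine forall_congr' fun t => ?_
          rw [he, hf]
          exact not_sep_iff (g t) u v x y
      _ ≤ (3032 * 8 ^ (N - 4)) ^ d := count_bad_all d huv hux huy hvx hvy hxy
  have hPcard : P.card ≤ n ^ 2 := by
    calc P.card ≤ (Finset.univ : Finset (↥G.edgeSet × ↥G.edgeSet)).card :=
          Finset.card_le_univ _
      _ = n ^ 2 := by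
          rw [Finset.card_univ, Fintype.card_prod, hcardE]; ring
  have hmain : ((8 : ℕ) ^ N) ^ d ≤ n ^ 2 * (3032 * 8 ^ (N - 4)) ^ d := by
    calc ((8 : ℕ) ^ N) ^ d
        = (Finset.univ : Finset (Fin d → V → Fin 8)).card := by
          rw [Finset.card_univ, Fintype.card_fun, Fintype.card_fun,
            Fintype.card_fin, Fintype.card_fin]
      _ ≤ (P.biUnion (fun p => Finset.univ.filter
            (fun g : Fin d → V → Fin 8 =>
              ∀ t, ¬ Sep (g t) (p.1 : Sym2 V) (p.2 : Sym2 V)))).card :=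
          Finset.card_le_card hcover
      _ ≤ ∑ p ∈ P, (Finset.univ.filter
            (fun g : Fin d → V → Fin 8 =>
              ∀ t, ¬ Sep (g t) (p.1 : Sym2 V) (p.2 : Sym2 V))).card :=
          Finset.card_biUnion_le
      _ ≤ ∑ _p ∈ P, (3032 * 8 ^ (N - 4)) ^ d := Finset.sum_le_sum hbound
      _ = P.card * (3032 * 8 ^ (N - 4)) ^ d := by rw [Finset.sum_const, smul_eq_mul]
      _ ≤ n ^ 2 * (3032 * 8 ^ (N - 4)) ^ d := Nat.mul_le_mul_right _ hPcard
  exact absurd hmain (not_le.2 (arith n d N hd hN4 hnd))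

end BoxAux

/-- If the line graph of `G` has `n ≥ 1` vertices (i.e. `G` has `n` edges), then
`boxi(L(G)) ≤ ⌈5 log₂ n⌉`. -/
theorem boxicity_lineGraph_le {V : Type*} [Fintype V] (G : SimpleGraph V)
    (n : ℕ) (hn : G.edgeSet.ncard = n) (h1 : 1 ≤ n) :
    ((G.lineGraph).boxicity : ℤ) ≤ ⌈5 * Real.logb 2 (n : ℝ)⌉ := by
  classical
  have h1R : (1 : ℝ) ≤ (n : ℝ) := by exact_mod_cast h1
  have hlogb_nonneg : 0 ≤ 5 * Real.logb 2 (n : ℝ) := by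
    have := Real.logb_nonneg (by norm_num : (1:ℝ) < 2) h1R
    linarith
  have hceil_nonneg : (0 : ℤ) ≤ ⌈5 * Real.logb 2 (n : ℝ)⌉ := Int.ceil_nonneg hlogb_nonneg
  set d : ℕ := (⌈5 * Real.logb 2 (n : ℝ)⌉).toNat with hddef
  have hdcast : (d : ℤ) = ⌈5 * Real.logb 2 (n : ℝ)⌉ := Int.toNat_of_nonneg hceil_nonneg
  suffices h : (G.lineGraph).boxicity ≤ d by
    calc ((G.lineGraph).boxicity : ℤ) ≤ (d : ℤ) := by exact_mod_cast h
      _ = _ := hdcast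
  rcases eq_or_lt_of_le h1 with h1' | h2
  · -- n = 1 : the line graph has a single vertex, boxicity 0
    have hone : G.edgeSet.ncard = 1 := by rw [hn, ← h1']
    obtain ⟨a, ha⟩ := Set.ncard_eq_one.1 hone
    have hbox0 : (G.lineGraph).boxicity ≤ 0 := by
      apply Nat.sInf_le
      refine ⟨fun _ i => i.elim0, fun v i => i.elim0, ?_⟩
      intro u v huv
      exfalso
      apply huv
      apply Subtype.ext
      have hu : (u : Sym2 V) ∈ ({a} : Set (Sym2 V)) := ha ▸ u.prop
      have hv : (v : Sym2 V) ∈ ({a} : Set (Sym2 V)) := ha ▸ v.prop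
      rw [Set.mem_singleton_iff.1 hu, Set.mem_singleton_iff.1 hv]
    exact le_trans hbox0 (Nat.zero_le d)
  · -- n ≥ 2
    have hnR : (1 : ℝ) < (n : ℝ) := by exact_mod_cast h2
    have hlog_pos : 0 < Real.logb 2 (n : ℝ) := Real.logb_pos (by norm_num) hnR
    have hd1 : 1 ≤ d := by
      have hlt : (0 : ℤ) < ⌈5 * Real.logb 2 (n : ℝ)⌉ := Int.ceil_pos.2 (by linarith)
      have : (1 : ℤ) ≤ (d : ℤ) := by rw [hdcast]; omega
      exact_mod_cast this
    have h5d : 5 * Real.logb 2 (n : ℝ) ≤ (d : ℝ) := by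
      have hle := Int.le_ceil (5 * Real.logb 2 (n : ℝ))
      have : ((⌈5 * Real.logb 2 (n : ℝ)⌉ : ℤ) : ℝ) = (d : ℝ) := by
        rw [← hdcast]; norm_num
    /- cast -/
      linarith [this ▸ hle]
    have hnd : n ^ 5 ≤ 2 ^ d := by
      have hn0 : (0 : ℝ) < (n : ℝ) := by linarith
      have hpow : ((n : ℝ)) ^ (5 : ℕ) ≤ (2 : ℝ) ^ (d : ℕ) := by
        have hrw : ((n : ℝ)) ^ (5 : ℕ) =
            (2 : ℝ) ^ (Real.logb 2 (((n : ℝ)) ^ (5 : ℕ))) := by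
          rw [Real.rpow_logb (by norm_num) (by norm_num) (by positivity)]
        rw [← Real.rpow_natCast 2 d, hrw]
        apply Real.rpow_le_rpow_of_exponent_le (by norm_num)
        rw [Real.logb_pow]
        calc (5 : ℕ) * Real.logb 2 (n : ℝ) = 5 * Real.logb 2 (n : ℝ) := by norm_num
          _ ≤ (d : ℝ) := h5d
      exact_mod_cast hpow
    obtain ⟨g, hg⟩ := BoxAux.exists_good_keys G n d hn hd1 hnd
    apply Nat.sInf_le
    exact ⟨_, BoxAux.isBoxRep_of G d g hg⟩
end

section
/- Let G = (V,E) be a finite simple graph and let u, v ∈ V be distinct vertices with uv ∉ E. Then boxi(G) ≤ boxi(G[V ∖ {u,v}]) + 1, where G[V ∖ {u,v}] is the subgraph of G induced on V ∖ {u,v}. -/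
theorem SimpleGraph.exists_isBoxRep {V : Type*} [Fintype V] (G : SimpleGraph V) :
    ∃ d, ∃ I : V → Fin d → Set ℝ, G.IsBoxRep d I := by
  classical
  set T := {p : V × V // p.1 ≠ p.2 ∧ ¬ G.Adj p.1 p.2} with hT
  set e := (Fintype.equivFin T) with he
  refine ⟨Fintype.card T, fun w i =>
    if w = (e.symm i).1.1 then Set.Icc 0 0
    else if w = (e.symm i).1.2 then Set.Icc 1 1 else Set.Icc 0 1, ?_, ?_⟩
  · intro w i
    dsimp only
    split_ifs
    exacts [⟨0, 0, le_refl _, rfl⟩, ⟨1, 1, le_refl _, rfl⟩, ⟨0, 1, zero_le_one, rfl⟩]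
  · intro x y hxy
    constructor
    · intro hadj i
      dsimp only
      by_cases h1 : x = (e.symm i).1.1
      · have hy2 : y ≠ (e.symm i).1.2 := by
          rintro rfl
          exact (e.symm i).2.2 (h1 ▸ hadj)
        have hy1 : y ≠ (e.symm i).1.1 := by rintro rfl; exact hxy.symm (h1 ▸ rfl) |>.elim
        rw [if_pos h1, if_neg hy1, if_neg hy2]
        exact ⟨0, by simp, by norm_num⟩
      · by_cases h2 : x = (e.symm i).1.2
        · have hy1 : y ≠ (e.symm i).1.1 := by
            rintro rfl
            exact (e.symm i).2.2 (by rw [← h2]; exact hadj.symm)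
          have hy2 : y ≠ (e.symm i).1.2 := fun h => hxy (h2.trans h.symm)
          rw [if_neg h1, if_pos h2, if_neg hy1, if_neg hy2]
          exact ⟨1, by simp, by norm_num⟩
        · rw [if_neg h1, if_neg h2]
          by_cases hy1 : y = (e.symm i).1.1
          · rw [if_pos hy1]; exact ⟨0, by norm_num, by simp⟩
          · by_cases hy2 : y = (e.symm i).1.2
            · rw [if_neg hy1, if_pos hy2]; exact ⟨1, by norm_num, by simp⟩
            · rw [if_neg hy1, if_neg hy2]; exact ⟨0, by norm_num, by norm_num⟩
    · intro h
      by_contra hna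
      have := h (e ⟨(x, y), hxy, hna⟩)
      simp only [Equiv.symm_apply_apply] at this
      rw [if_neg (Ne.symm hxy)] at this
      simp only [if_true] at this
      obtain ⟨t, ht1, ht2⟩ := this
      simp at ht1 ht2
      rw [ht1] at ht2
      norm_num at ht2

/-- If `u ≠ v` are non-adjacent vertices of `G`, then
`boxi(G) ≤ boxi(G[V ∖ {u,v}]) + 1`. -/
theorem boxicity_le_boxicity_induce_add_one
    {V : Type*} [Fintype V] (G : SimpleGraph V) (u v : V)
    (huv : u ≠ v) (hadj : ¬ G.Adj u v) :
    G.boxicity ≤ (G.induce (({u, v} : Set V)ᶜ)).boxicity + 1 := by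
  classical
  set W : Set V := ({u, v} : Set V)ᶜ with hWdef
  set H := G.induce W with hHdef
  set d := H.boxicity with hd
  have hWmem : ∀ w : V, w ∈ W ↔ w ≠ u ∧ w ≠ v := by
    intro w; simp [hWdef, not_or]
  have huW : u ∉ W := fun h => ((hWmem u).mp h).1 rfl
  have hvW : v ∉ W := fun h => ((hWmem v).mp h).2 rfl
  -- obtain a representation of H in dimension d
  have hne : {n : ℕ | ∃ I : W → Fin n → Set ℝ, H.IsBoxRep n I}.Nonempty := by
    obtain ⟨n, I, h⟩ := H.exists_isBoxRep
    exact ⟨n, I, h⟩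
  have hmem : ∃ J : W → Fin d → Set ℝ, H.IsBoxRep d J := Nat.sInf_mem hne
  obtain ⟨J, hJ⟩ := hmem
  choose a b hab hJab using hJ.1
  obtain ⟨M, hM⟩ := Finite.exists_le (fun p : W × Fin d => |a p.1 p.2|)
  set M' : ℝ := max M 0 with hM'
  have hM'0 : (0 : ℝ) ≤ M' := le_max_right _ _
  have haM : ∀ (w : W) (i : Fin d), a w i ∈ Set.Icc (-M') M' := by
    intro w i
    have h1 : |a w i| ≤ M' := le_trans (hM (w, i)) (le_max_left _ _)
    exact ⟨neg_le_of_abs_le h1 |>.trans_eq rfl |>.trans (le_refl _) |> fun h => h, le_trans (le_abs_self _) h1⟩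
  -- the last-coordinate intervals
  set L : V → Set ℝ := fun w =>
    if w = u then Set.Icc 0 0 else if w = v then Set.Icc 1 1 else
      Set.Icc (if G.Adj w u then 0 else 1/2) (if G.Adj w v then 1 else 1/2) with hLdef
  have hLu : L u = Set.Icc 0 0 := by simp [hLdef]
  have hLv : L v = Set.Icc 1 1 := by simp [hLdef, Ne.symm huv]
  have hLw : ∀ w ∈ W, L w =
      Set.Icc (if G.Adj w u then 0 else 1/2) (if G.Adj w v then 1 else 1/2) := by
    intro w hw
    obtain ⟨h1, h2⟩ := (hWmem w).mp hw
    simp [hLdef, h1, h2]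
  have hhalf : ∀ w ∈ W, (1/2 : ℝ) ∈ L w := by
    intro w hw
    rw [hLw w hw]
    constructor <;> split_ifs <;> norm_num
  have hzero : ∀ w ∈ W, ((0 : ℝ) ∈ L w ↔ G.Adj w u) := by
    intro w hw
    rw [hLw w hw]
    by_cases h : G.Adj w u <;> simp [h, Set.mem_Icc] <;> split_ifs <;> norm_num
  have hone : ∀ w ∈ W, ((1 : ℝ) ∈ L w ↔ G.Adj w v) := by
    intro w hw
    rw [hLw w hw]
    by_cases h : G.Adj w v <;> simp [h, Set.mem_Icc] <;> split_ifs <;> norm_num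
  -- the box representation of G in dimension d + 1
  set I : V → Fin (d + 1) → Set ℝ := fun w =>
    Fin.snoc (fun i => if h : w ∈ W then J ⟨w, h⟩ i else Set.Icc (-M') M') (L w) with hIdef
  have hIlast : ∀ w, I w (Fin.last d) = L w := by
    intro w; simp [hIdef]
  have hIcast : ∀ w (i : Fin d),
      I w i.castSucc = if h : w ∈ W then J ⟨w, h⟩ i else Set.Icc (-M') M' := by
    intro w i; simp [hIdef]
  -- first d coordinates always intersect when one vertex is outside W
  have hbig : ∀ (y : V) (i : Fin d),
      ((Set.Icc (-M') M' : Set ℝ) ∩ (if h : y ∈ W then J ⟨y, h⟩ i else Set.Icc (-M') M')).Nonempty := by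
    intro y i
    by_cases h : y ∈ W
    · rw [dif_pos h]
      exact ⟨a ⟨y, h⟩ i, haM _ _, by rw [hJab]; exact ⟨le_refl _, hab _ _⟩⟩
    · rw [dif_neg h]
      exact ⟨0, ⟨neg_nonpos_of_nonneg hM'0, hM'0⟩, ⟨neg_nonpos_of_nonneg hM'0, hM'0⟩⟩
  -- key adjacency fact for a vertex outside W versus one inside W
  have houter : ∀ x y : V, x ∉ W → y ∈ W →
      (G.Adj x y ↔ ∀ i, (I x i ∩ I y i).Nonempty) := by
    intro x y hx hy
    have hxuv : x = u ∨ x = v := by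
      by_contra h
      push_neg at h
      exact hx ((hWmem x).mpr h)
    constructor
    · intro h i
      refine Fin.lastCases ?_ ?_ i
      · rw [hIlast, hIlast]
        rcases hxuv with rfl | rfl
        · exact ⟨0, by rw [hLu]; norm_num, (hzero y hy).mpr h.symm⟩
        · exact ⟨1, by rw [hLv]; norm_num, (hone y hy).mpr h.symm⟩
      · intro j
        rw [hIcast, hIcast, dif_neg hx]
        exact hbig y j
    · intro h
      have h2 := h (Fin.last d)
      rw [hIlast, hIlast] at h2
      obtain ⟨t, htx, hty⟩ := h2
      rcases hxuv with rfl | rfl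
      · rw [hLu] at htx
        have : t = 0 := le_antisymm htx.2 htx.1
        subst this
        exact ((hzero y hy).mp hty).symm
      · rw [hLv] at htx
        have : t = 1 := le_antisymm htx.2 htx.1
        subst this
        exact ((hone y hy).mp hty).symm
  have key : ∀ x y : V, x ≠ y → (G.Adj x y ↔ ∀ i, (I x i ∩ I y i).Nonempty) := by
    intro x y hxy
    by_cases hx : x ∈ W
    · by_cases hy : y ∈ W
      · -- both inside W : use the representation J of H
        have hsub : (⟨x, hx⟩ : W) ≠ ⟨y, hy⟩ := fun h => hxy (congrArg Subtype.val h)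
        have hadjH : G.Adj x y ↔ H.Adj ⟨x, hx⟩ ⟨y, hy⟩ := by
          simp [hHdef]
        rw [hadjH, hJ.2 _ _ hsub]
        constructor
        · intro h i
          refine Fin.lastCases ?_ ?_ i
          · rw [hIlast, hIlast]
            exact ⟨1/2, hhalf x hx, hhalf y hy⟩
          · intro j
            rw [hIcast, hIcast, dif_pos hx, dif_pos hy]
            exact h j
        · intro h j
          have := h j.castSucc
          rw [hIcast, hIcast, dif_pos hx, dif_pos hy] at this
          exact this
      · rw [G.adj_comm, houter y x hy hx]
        exact ⟨fun h i => (h i).imp fun t ht => ⟨ht.2, ht.1⟩,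
               fun h i => (h i).imp fun t ht => ⟨ht.2, ht.1⟩⟩
    · by_cases hy : y ∈ W
      · exact houter x y hx hy
      · -- x, y ∈ {u, v}, x ≠ y
        have hxuv : x = u ∨ x = v := by
          by_contra h; push_neg at h; exact hx ((hWmem x).mpr h)
        have hyuv : y = u ∨ y = v := by
          by_contra h; push_neg at h; exact hy ((hWmem y).mpr h)
        have hfalse : ¬ G.Adj x y := by
          rcases hxuv with rfl | rfl <;> rcases hyuv with rfl | rfl
          · exact fun h => G.irrefl h
          · exact hadj
          · exact fun h => hadj h.symm
          · exact fun h => G.irrefl h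
        have hnint : ¬ ∀ i, (I x i ∩ I y i).Nonempty := by
          intro h
          have h2 := h (Fin.last d)
          rw [hIlast, hIlast] at h2
          obtain ⟨t, htx, hty⟩ := h2
          rcases hxuv with rfl | rfl <;> rcases hyuv with rfl | rfl
          · exact hxy rfl
          · rw [hLu] at htx; rw [hLv] at hty
            have : t = 0 := le_antisymm htx.2 htx.1
            rw [this] at hty; norm_num at hty
          · rw [hLv] at htx; rw [hLu] at hty
            have : t = 1 := le_antisymm htx.2 htx.1
            rw [this] at hty; norm_num at hty
          · exact hxy rfl
        exact iff_of_false hfalse hnint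
  have hrep : G.IsBoxRep (d + 1) I := by
    refine ⟨?_, key⟩
    intro w i
    refine Fin.lastCases ?_ ?_ i
    · rw [hIlast]
      by_cases h1 : w = u
      · subst h1; exact ⟨0, 0, le_refl _, hLu⟩
      · by_cases h2 : w = v
        · subst h2; exact ⟨1, 1, le_refl _, hLv⟩
        · refine ⟨_, _, ?_, hLw w ((hWmem w).mpr ⟨h1, h2⟩)⟩
          split_ifs <;> norm_num
    · intro j
      rw [hIcast]
      by_cases h : w ∈ W
      · rw [dif_pos h]; exact ⟨a _ _, b _ _, hab _ _, hJab _ _⟩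
      · rw [dif_neg h]; exact ⟨-M', M', by linarith, rfl⟩
  exact Nat.sInf_le ⟨I, hrep⟩
end

section
/- Every finite simple graph G on n vertices satisfies boxi(G) ≤ ⌊n/2⌋. -/
lemma step_rep {V : Type*} [Fintype V] (G : SimpleGraph V) (u v : V) (huv : u ≠ v)
    (hna : ¬ G.Adj u v) {d : ℕ}
    (I' : {w : V // w ≠ u ∧ w ≠ v} → Fin d → Set ℝ)
    (hI' : (G.induce {w | w ≠ u ∧ w ≠ v}).IsBoxRep d I') :
    ∃ I : V → Fin (d + 1) → Set ℝ, G.IsBoxRep (d + 1) I := by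
  classical
  have hpt : ∀ (w : {w : V // w ≠ u ∧ w ≠ v}) (i : Fin d), (I' w i).Nonempty := by
    intro w i
    obtain ⟨a, b, hab, h⟩ := hI'.1 w i
    rw [h]; exact Set.nonempty_Icc.2 hab
  choose p hp using hpt
  let F : Fin d → Finset ℝ := fun i =>
    insert 0 (Finset.univ.image fun w : {w : V // w ≠ u ∧ w ≠ v} => p w i)
  have hF : ∀ i, (F i).Nonempty := fun i => ⟨0, Finset.mem_insert_self _ _⟩
  let lo : Fin d → ℝ := fun i => (F i).min' (hF i)
  let hi : Fin d → ℝ := fun i => (F i).max' (hF i)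
  have hlo : ∀ (w : {w : V // w ≠ u ∧ w ≠ v}) i, lo i ≤ p w i := fun w i =>
    Finset.min'_le _ _ (Finset.mem_insert_of_mem (Finset.mem_image_of_mem _ (Finset.mem_univ w)))
  have hhi : ∀ (w : {w : V // w ≠ u ∧ w ≠ v}) i, p w i ≤ hi i := fun w i =>
    Finset.le_max' (F i) (p w i)
      (Finset.mem_insert_of_mem (Finset.mem_image_of_mem _ (Finset.mem_univ w)))
  have hlohi : ∀ i, lo i ≤ hi i := fun i =>
    le_trans (Finset.min'_le _ 0 (Finset.mem_insert_self _ _))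
      (Finset.le_max' _ 0 (Finset.mem_insert_self _ _))
  let J : V → Fin d → Set ℝ := fun w j =>
    if hw : w ≠ u ∧ w ≠ v then I' ⟨w, hw⟩ j else Set.Icc (lo j) (hi j)
  let K : V → Set ℝ := fun w =>
    if w = u then Set.Icc 0 1 else if w = v then Set.Icc 2 3
    else Set.Icc (if G.Adj u w then 0 else 7/5) (if G.Adj v w then 3 else 8/5)
  have hKu : K u = Set.Icc 0 1 := if_pos rfl
  have hKv : K v = Set.Icc 2 3 := by
    simp [K, huv.symm]
  have hKx : ∀ x, x ≠ u → x ≠ v →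
      K x = Set.Icc (if G.Adj u x then 0 else 7/5) (if G.Adj v x then 3 else 8/5) := by
    intro x h1 h2; simp only [K]; rw [if_neg h1, if_neg h2]
  have hJuv : ∀ w, (w = u ∨ w = v) → ∀ j, J w j = Set.Icc (lo j) (hi j) := by
    intro w hw j; simp only [J]
    rw [dif_neg]
    rintro ⟨h1, h2⟩
    rcases hw with rfl | rfl
    exacts [h1 rfl, h2 rfl]
  have hJout : ∀ w (hw : w ≠ u ∧ w ≠ v) j, J w j = I' ⟨w, hw⟩ j := fun w hw j => dif_pos hw
  have inter_span : ∀ x j, (Set.Icc (lo j) (hi j) ∩ J x j).Nonempty := by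
    intro x j
    by_cases hx : x ≠ u ∧ x ≠ v
    · rw [hJout x hx]
      exact ⟨p ⟨x, hx⟩ j, ⟨hlo _ _, hhi _ _⟩, hp _ _⟩
    · rw [hJuv x (by tauto) j]
      exact ⟨lo j, ⟨le_refl _, hlohi j⟩, le_refl _, hlohi j⟩
  have inter_last_u : ∀ x, x ≠ u → x ≠ v → ((K u ∩ K x).Nonempty ↔ G.Adj u x) := by
    intro x h1 h2
    rw [hKu, hKx x h1 h2]
    by_cases h : G.Adj u x
    · refine iff_of_true ⟨0, Set.mem_Icc.2 ⟨le_refl 0, by norm_num⟩,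
        Set.mem_Icc.2 ⟨?_, ?_⟩⟩ h
      · rw [if_pos h]
      · split_ifs <;> norm_num
    · refine iff_of_false ?_ h
      rintro ⟨y, ⟨-, hy1⟩, hy2, -⟩
      rw [if_neg h] at hy2
      linarith
  have inter_last_v : ∀ x, x ≠ u → x ≠ v → ((K v ∩ K x).Nonempty ↔ G.Adj v x) := by
    intro x h1 h2
    rw [hKv, hKx x h1 h2]
    by_cases h : G.Adj v x
    · refine iff_of_true ⟨3, Set.mem_Icc.2 ⟨by norm_num, le_refl 3⟩,
        Set.mem_Icc.2 ⟨?_, ?_⟩⟩ h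
      · split_ifs <;> norm_num
      · rw [if_pos h]
    · refine iff_of_false ?_ h
      rintro ⟨y, ⟨hy1, -⟩, -, hy2⟩
      rw [if_neg h] at hy2
      linarith
  have inter_last_uv : ¬ (K u ∩ K v).Nonempty := by
    rw [hKu, hKv]
    rintro ⟨y, ⟨-, h1⟩, h2, -⟩
    linarith
  have inter_last_out : ∀ w x, w ≠ u → w ≠ v → x ≠ u → x ≠ v → (K w ∩ K x).Nonempty := by
    intro w x hw1 hw2 hx1 hx2
    rw [hKx w hw1 hw2, hKx x hx1 hx2]
    refine ⟨7/5, ⟨?_, ?_⟩, ?_, ?_⟩ <;> split_ifs <;> norm_num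
  refine ⟨fun w => Fin.lastCases (K w) (J w), ?_, ?_⟩
  · intro w i
    induction i using Fin.lastCases with
    | last =>
      simp only [Fin.lastCases_last]
      rcases eq_or_ne w u with rfl | h1
      · exact ⟨0, 1, by norm_num, hKu⟩
      rcases eq_or_ne w v with rfl | h2
      · exact ⟨2, 3, by norm_num, hKv⟩
      · refine ⟨_, _, ?_, hKx w h1 h2⟩
        split_ifs <;> norm_num
    | cast j =>
      simp only [Fin.lastCases_castSucc]
      by_cases hw : w ≠ u ∧ w ≠ v
      · rw [hJout w hw]; exact hI'.1 ⟨w, hw⟩ j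
      · rw [hJuv w (by tauto) j]; exact ⟨lo j, hi j, hlohi j, rfl⟩
  · -- the adjacency condition
    have main : ∀ w x : V, w ≠ x → (w = u ∨ w = v) →
        (G.Adj w x ↔ ∀ i, ((Fin.lastCases (K w) (J w) : ∀ _ : Fin (d+1), Set ℝ) i ∩
          (Fin.lastCases (K x) (J x) : ∀ _ : Fin (d+1), Set ℝ) i).Nonempty) := by
      intro w x hwx hwuv
      rcases hwuv with rfl | rfl
      · -- w = u
        rcases eq_or_ne x v with rfl | hxv
        · refine iff_of_false hna (fun h => ?_)
          have := h (Fin.last d)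
          simp only [Fin.lastCases_last, Fin.lastCases_last] at this
          exact inter_last_uv this
        · constructor
          · intro ha i
            induction i using Fin.lastCases with
            | last =>
              simp only [Fin.lastCases_last, Fin.lastCases_last]
              exact (inter_last_u x (Ne.symm hwx) hxv).2 ha
            | cast j =>
              simp only [Fin.lastCases_castSucc, Fin.lastCases_castSucc, hJuv w (Or.inl rfl)]
              exact inter_span x j
          · intro h
            have := h (Fin.last d)
            simp only [Fin.lastCases_last, Fin.lastCases_last] at this
            exact (inter_last_u x (Ne.symm hwx) hxv).1 this
      · -- w = v
        rcases eq_or_ne x u with rfl | hxu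
        · refine iff_of_false (fun h => hna h.symm) (fun h => ?_)
          have := h (Fin.last d)
          simp only [Fin.lastCases_last, Fin.lastCases_last] at this
          exact inter_last_uv ⟨this.choose, this.choose_spec.2, this.choose_spec.1⟩
        · constructor
          · intro ha i
            induction i using Fin.lastCases with
            | last =>
              simp only [Fin.lastCases_last, Fin.lastCases_last]
              exact (inter_last_v x hxu (Ne.symm hwx)).2 ha
            | cast j =>
              simp only [Fin.lastCases_castSucc, Fin.lastCases_castSucc, hJuv w (Or.inr rfl)]
              exact inter_span x j
          · intro h
            have := h (Fin.last d)
            simp only [Fin.lastCases_last, Fin.lastCases_last] at this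
            exact (inter_last_v x hxu (Ne.symm hwx)).1 this
    intro w x hwx
    by_cases hw : w ≠ u ∧ w ≠ v
    · by_cases hx : x ≠ u ∧ x ≠ v
      · -- both outside
        have hne : (⟨w, hw⟩ : {w : V // w ≠ u ∧ w ≠ v}) ≠ ⟨x, hx⟩ := by
          intro h; exact hwx (congrArg Subtype.val h)
        have hadj : G.Adj w x ↔ ∀ j, (I' ⟨w, hw⟩ j ∩ I' ⟨x, hx⟩ j).Nonempty := by
          have := hI'.2 ⟨w, hw⟩ ⟨x, hx⟩ hne
          simpa using this
        rw [hadj]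
        constructor
        · intro h i
          induction i using Fin.lastCases with
          | last =>
            simp only [Fin.lastCases_last, Fin.lastCases_last]
            exact inter_last_out w x hw.1 hw.2 hx.1 hx.2
          | cast j =>
            simp only [Fin.lastCases_castSucc, Fin.lastCases_castSucc, hJout w hw, hJout x hx]
            exact h j
        · intro h j
          have := h (Fin.castSucc j)
          simp only [Fin.lastCases_castSucc, hJout w hw, hJout x hx] at this
          exact this
      · -- x ∈ {u,v}: use symmetry
        have hx' : x = u ∨ x = v := by tauto
        have := main x w (Ne.symm hwx) hx'
        rw [G.adj_comm] at this
        rw [this]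
        exact forall_congr' fun i => by rw [Set.inter_comm]
    · exact main w x hwx (by tauto)

universe u in
lemma exists_rep_half (n : ℕ) : ∀ (V : Type u) [Fintype V] (G : SimpleGraph V),
    Fintype.card V = n → ∃ I : V → Fin (n / 2) → Set ℝ, G.IsBoxRep (n / 2) I := by
  induction n using Nat.strong_induction_on with
  | _ n ih =>
    intro V _ G hn
    classical
    by_cases hc : ∀ u v : V, u ≠ v → G.Adj u v
    · refine ⟨fun _ _ => Set.Icc 0 1, fun v i => ⟨0, 1, by norm_num, rfl⟩, fun a b hab => ?_⟩
      simp only [hc a b hab, true_iff]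
      exact fun i => ⟨0, by norm_num, by norm_num⟩
    · push_neg at hc
      obtain ⟨u, v, huv, hna⟩ := hc
      have h2n : 2 ≤ n := by
        rw [← hn]
        exact Fintype.one_lt_card_iff_nontrivial.2 ⟨u, v, huv⟩
      have hcard : Fintype.card {w : V // w ≠ u ∧ w ≠ v} = n - 2 := by
        rw [Fintype.card_subtype]
        have : Finset.univ.filter (fun w : V => w ≠ u ∧ w ≠ v) = Finset.univ \ {u, v} := by
          ext w; simp [and_comm]
        rw [this, Finset.card_sdiff_of_subset (Finset.subset_univ _), Finset.card_pair huv,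
          Finset.card_univ, hn]
      obtain ⟨I', hI'⟩ := ih (n - 2) (by omega) {w : V // w ≠ u ∧ w ≠ v}
        (G.induce {w | w ≠ u ∧ w ≠ v}) hcard
      obtain ⟨I, hI⟩ := step_rep G u v huv hna I' hI'
      have heq : (n - 2) / 2 + 1 = n / 2 := by omega
      rw [← heq]
      exact ⟨I, hI⟩

/-- Every finite simple graph on `n` vertices has boxicity at most `⌊n/2⌋`. -/
theorem boxicity_le_half_card {V : Type*} [Fintype V] (G : SimpleGraph V)
    (n : ℕ) (hn : Fintype.card V = n) :
    G.boxicity ≤ n / 2 := by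
  obtain ⟨I, hI⟩ := exists_rep_half n V G hn
  exact Nat.sInf_le ⟨I, hI⟩
end

section
/- A finite simple graph G = (V,E) on n vertices is an interval-order graph if and only if there is an ordering (v_1, …, v_n) of V such that for all indices i > j one has N⁺(v_i) ⊆ N⁺(v_j), where N⁺(v_l) = {v_m : v_l v_m ∈ E and l < m}. -/
private lemma icc_inter_nonempty {a b c d : ℝ} (h1 : a ≤ b) (h2 : c ≤ d) :
    (Set.Icc a b ∩ Set.Icc c d).Nonempty ↔ a ≤ d ∧ c ≤ b := by
  rw [Set.Icc_inter_Icc, Set.nonempty_Icc, max_le_iff, le_min_iff, le_min_iff]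
  constructor
  · rintro ⟨⟨_, h3⟩, h4, _⟩; exact ⟨h3, h4⟩
  · rintro ⟨h3, h4⟩; exact ⟨⟨h1, h3⟩, h4, h2⟩

private lemma downclosed_mem_iff_lt_card {n : ℕ} (S : Finset (Fin n))
    (hdc : ∀ i j : Fin n, i ≤ j → j ∈ S → i ∈ S) (i : Fin n) :
    i ∈ S ↔ (i : ℕ) < S.card := by
  constructor
  · intro hi
    have h1 : Finset.Iic i ⊆ S := fun j hj => hdc j i (Finset.mem_Iic.mp hj) hi
    have h2 := Finset.card_le_card h1
    rw [Fin.card_Iic] at h2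
    omega
  · intro hi
    by_contra h
    have h1 : S ⊆ Finset.Iio i := by
      intro j hj
      rw [Finset.mem_Iio]
      by_contra hj2
      exact h (hdc i j (le_of_not_gt hj2) hj)
    have h2 := Finset.card_le_card h1
    rw [Fin.card_Iio] at h2
    omega

open Classical in
/-- The number of forward neighbours of `σ m`. -/
private noncomputable def fwdCount {V : Type*} {n : ℕ} (G : SimpleGraph V) (σ : Fin n ≃ V)
    (m : Fin n) : ℕ :=
  (Finset.univ.filter fun i' : Fin n => i' < m ∧ G.Adj (σ i') (σ m)).card

private lemma fwdCount_le {V : Type*} {n : ℕ} (G : SimpleGraph V) (σ : Fin n ≃ V) (m : Fin n) :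
    fwdCount G σ m ≤ (m : ℕ) := by
  classical
  rw [fwdCount]
  have h : (Finset.univ.filter fun i' : Fin n => i' < m ∧ G.Adj (σ i') (σ m)) ⊆ Finset.Iio m := by
    intro x hx
    simp only [Finset.mem_filter] at hx
    exact Finset.mem_Iio.mpr hx.2.1
  have := Finset.card_le_card h
  rwa [Fin.card_Iio] at this

private lemma adj_iff_lt_fwdCount {V : Type*} {n : ℕ} (G : SimpleGraph V) (σ : Fin n ≃ V)
    (hσ : ∀ i j : Fin n, j < i →
      {w : V | ∃ m : Fin n, w = σ m ∧ i < m ∧ G.Adj (σ i) w} ⊆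
        {w : V | ∃ m : Fin n, w = σ m ∧ j < m ∧ G.Adj (σ j) w})
    (i m : Fin n) (him : i < m) :
    G.Adj (σ i) (σ m) ↔ (i : ℕ) < fwdCount G σ m := by
  classical
  have hdc : ∀ i' j' : Fin n, i' ≤ j' →
      j' ∈ (Finset.univ.filter fun i' : Fin n => i' < m ∧ G.Adj (σ i') (σ m)) →
      i' ∈ (Finset.univ.filter fun i' : Fin n => i' < m ∧ G.Adj (σ i') (σ m)) := by
    intro i' j' hle hj'
    simp only [Finset.mem_filter, Finset.mem_univ, true_and] at hj' ⊢
    obtain ⟨hj'm, hadj'⟩ := hj'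
    refine ⟨lt_of_le_of_lt hle hj'm, ?_⟩
    rcases eq_or_lt_of_le hle with rfl | hlt
    · exact hadj'
    · obtain ⟨m', _, _, hadj''⟩ := hσ j' i' hlt ⟨m, rfl, hj'm, hadj'⟩
      exact hadj''
  have h := downclosed_mem_iff_lt_card _ hdc i
  simp only [Finset.mem_filter, Finset.mem_univ, true_and] at h
  rw [fwdCount]
  rw [← h]
  constructor
  · intro hadj; exact ⟨him, hadj⟩
  · intro hadj; exact hadj.2

private lemma not_adj_iff_real {V : Type*} {n : ℕ} (G : SimpleGraph V) (σ : Fin n ≃ V)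
    (hσ : ∀ i j : Fin n, j < i →
      {w : V | ∃ m : Fin n, w = σ m ∧ i < m ∧ G.Adj (σ i) w} ⊆
        {w : V | ∃ m : Fin n, w = σ m ∧ j < m ∧ G.Adj (σ j) w})
    (i m : Fin n) (him : i < m) :
    (¬ G.Adj (σ i) (σ m)) ↔
      ((fwdCount G σ i : ℝ) + 1/2 ≤ ((m : ℕ) : ℝ) + 1 ∧
        (fwdCount G σ m : ℝ) + 1/2 ≤ ((i : ℕ) : ℝ) + 1) := by
  have hvl : (i : ℕ) < (m : ℕ) := him
  have h1 : (fwdCount G σ i : ℝ) + 1/2 ≤ ((m : ℕ) : ℝ) + 1 := by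
    have h := fwdCount_le G σ i
    have : (fwdCount G σ i : ℝ) ≤ ((i : ℕ) : ℝ) := by exact_mod_cast h
    have : ((i : ℕ) : ℝ) < ((m : ℕ) : ℝ) := by exact_mod_cast hvl
    have h' : (fwdCount G σ i : ℝ) ≤ ((i : ℕ) : ℝ) := by exact_mod_cast h
    linarith
  rw [adj_iff_lt_fwdCount G σ hσ i m him]
  constructor
  · intro h
    have hle : fwdCount G σ m ≤ (i : ℕ) := by omega
    have : (fwdCount G σ m : ℝ) ≤ ((i : ℕ) : ℝ) := by exact_mod_cast hle
    exact ⟨h1, by linarith⟩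
  · rintro ⟨_, h2⟩ hlt
    have : (fwdCount G σ m : ℝ) < ((i : ℕ) : ℝ) + 1 := by linarith
    have : fwdCount G σ m < (i : ℕ) + 1 := by exact_mod_cast this
    omega

/-- A graph on `n` vertices is an interval-order graph iff its vertices admit an ordering
`(v_1, …, v_n)` such that `i > j` implies `N⁺(v_i) ⊆ N⁺(v_j)`, where
`N⁺(v_l) = {v_m : v_l v_m ∈ E, l < m}`. -/
theorem isIntervalOrderGraph_iff_ordering
    {V : Type*} [Fintype V] (G : SimpleGraph V) (n : ℕ) (hn : Fintype.card V = n) :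
    G.IsIntervalOrderGraph ↔ ∃ σ : Fin n ≃ V, ∀ i j : Fin n, j < i →
      {w : V | ∃ m : Fin n, w = σ m ∧ i < m ∧ G.Adj (σ i) w} ⊆
        {w : V | ∃ m : Fin n, w = σ m ∧ j < m ∧ G.Adj (σ j) w} := by
  constructor
  · rintro ⟨I, hI, hadj⟩
    choose a b hab hIcc using hI
    have e : V ≃ Fin n := Fintype.equivFinOfCardEq hn
    set π := Tuple.sort (fun i => b (e.symm i)) with hπ
    set σ : Fin n ≃ V := π.trans e.symm with hσdef
    have mono : Monotone (fun i => b (σ i)) := by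
      have := Tuple.monotone_sort (fun i => b (e.symm i))
      exact this
    have key : ∀ u v : V, u ≠ v → G.Adj u v → b u < a v ∨ b v < a u := by
      intro u v huv hGuv
      have h1 : ¬ Gᶜ.Adj u v := by simp [SimpleGraph.compl_adj, hGuv]
      rw [hadj u v huv, hIcc, hIcc, icc_inter_nonempty (hab u) (hab v)] at h1
      push_neg at h1
      rcases le_or_gt (a u) (b v) with h | h
      · exact Or.inl (h1 h)
      · exact Or.inr h
    refine ⟨σ, ?_⟩
    rintro i j hji w ⟨m, rfl, him, hadjm⟩
    have hne : σ i ≠ σ m := fun h => (ne_of_lt him) (σ.injective h)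
    have hbi : b (σ i) ≤ b (σ m) := mono him.le
    have hbj : b (σ j) ≤ b (σ i) := mono hji.le
    have hbm : b (σ i) < a (σ m) := by
      rcases key (σ i) (σ m) hne hadjm with h | h
      · exact h
      · linarith [hab (σ i)]
    have hne2 : σ j ≠ σ m := fun h => (ne_of_lt (hji.trans him)) (σ.injective h)
    have hempty : ¬ (I (σ j) ∩ I (σ m)).Nonempty := by
      rw [hIcc, hIcc, icc_inter_nonempty (hab _) (hab _)]
      push_neg
      intro _
      linarith
    have hnc : ¬ Gᶜ.Adj (σ j) (σ m) := fun h => hempty ((hadj _ _ hne2).mp h)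
    rw [SimpleGraph.compl_adj] at hnc
    push_neg at hnc
    exact ⟨m, rfl, hji.trans him, hnc hne2⟩
  · rintro ⟨σ, hσ⟩
    refine ⟨fun v => Set.Icc ((fwdCount G σ (σ.symm v) : ℝ) + 1/2)
      (((σ.symm v : ℕ) : ℝ) + 1), ?_, ?_⟩
    · intro v
      refine ⟨_, _, ?_, rfl⟩
      have h := fwdCount_le G σ (σ.symm v)
      have : (fwdCount G σ (σ.symm v) : ℝ) ≤ ((σ.symm v : ℕ) : ℝ) := by exact_mod_cast h
      linarith
    · intro u v huv
      obtain ⟨i, rfl⟩ : ∃ i, u = σ i := ⟨σ.symm u, (σ.apply_symm_apply u).symm⟩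
      obtain ⟨m, rfl⟩ : ∃ m, v = σ m := ⟨σ.symm v, (σ.apply_symm_apply v).symm⟩
      simp only [Equiv.symm_apply_apply]
      have hle : ∀ k : Fin n, (fwdCount G σ k : ℝ) + 1/2 ≤ ((k : ℕ) : ℝ) + 1 := by
        intro k
        have h := fwdCount_le G σ k
        have : (fwdCount G σ k : ℝ) ≤ ((k : ℕ) : ℝ) := by exact_mod_cast h
        linarith
      rw [icc_inter_nonempty (hle i) (hle m), SimpleGraph.compl_adj]
      have hne : i ≠ m := fun h => huv (congrArg σ h)
      rcases hne.lt_or_gt with hlt | hlt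
      · rw [← not_adj_iff_real G σ hσ i m hlt]
        exact ⟨fun h => h.2, fun h => ⟨huv, h⟩⟩
      · have := not_adj_iff_real G σ hσ m i hlt
        rw [G.adj_comm] at this
        exact ⟨fun h => ⟨(this.mp h.2).2, (this.mp h.2).1⟩,
          fun h => ⟨huv, this.mpr ⟨h.2, h.1⟩⟩⟩
end

section
/- Let G = (V,E) be a finite simple graph. For any ordering σ of V, the graph G^σ is an interval-order subgraph of G. Conversely, every maximal interval-order subgraph of G equals G^σ for some ordering σ of V. -/
/-- Given an ordering `σ = (v_1, …, v_n)` of the vertices of `G`, the graph `G^σ`: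
with `V_0 = V` and `V_i = V_{i-1} ∩ N_G(v_i)` (so `V_i = ⋂_{l ≤ i} N_G(v_l)`), its edge set is
`E_1 ∪ … ∪ E_n` where `E_i` consists of the edges joining `v_i` to the vertices of `V_i`. -/
def orderGraph {V : Type*} {n : ℕ} (G : SimpleGraph V) (σ : Fin n ≃ V) : SimpleGraph V :=
  SimpleGraph.fromRel (fun x w => ∃ i : Fin n, x = σ i ∧ ∀ l : Fin n, l ≤ i → G.Adj (σ l) w)


/-- Key lemma: for any ordering `σ`, `G^σ` is an interval-order subgraph of `G`. -/
lemma orderGraph_key {V : Type*} {n : ℕ} (G : SimpleGraph V) (σ : Fin n ≃ V) :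
    orderGraph G σ ≤ G ∧ (orderGraph G σ).IsIntervalOrderGraph := by
  classical
  have hSne : ∀ w : V,
      (Finset.univ.filter (fun l : Fin n => ¬ G.Adj (σ l) w)).Nonempty := by
    intro w
    exact ⟨σ.symm w, by simp⟩
  set p : V → Fin n :=
    fun w => (Finset.univ.filter (fun l : Fin n => ¬ G.Adj (σ l) w)).min' (hSne w) with hp
  have hpB : ∀ w, ¬ G.Adj (σ (p w)) w := by
    intro w
    have := Finset.min'_mem _ (hSne w)
    simpa [hp] using this
  have hpA : ∀ w (l : Fin n), l < p w → G.Adj (σ l) w := by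
    intro w l hl
    by_contra h
    have : p w ≤ l := Finset.min'_le _ _ (by simp [h])
    exact absurd hl (not_lt.mpr this)
  have hpC : ∀ w, p w ≤ σ.symm w := by
    intro w
    exact Finset.min'_le _ _ (by simp)
  have hrel : ∀ x y : V,
      (∃ i : Fin n, x = σ i ∧ ∀ l : Fin n, l ≤ i → G.Adj (σ l) y) ↔ σ.symm x < p y := by
    intro x y
    constructor
    · rintro ⟨i, rfl, h⟩
      rw [Equiv.symm_apply_apply]
      by_contra hle
      push_neg at hle
      exact hpB y (h _ hle)
    · intro h
      exact ⟨σ.symm x, (σ.apply_symm_apply x).symm,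
        fun l hl => hpA y l (lt_of_le_of_lt hl h)⟩
  have hadj : ∀ u w : V, (orderGraph G σ).Adj u w ↔
      u ≠ w ∧ (σ.symm u < p w ∨ σ.symm w < p u) := by
    intro u w
    rw [orderGraph, SimpleGraph.fromRel_adj, hrel, hrel]
  constructor
  · intro u w h
    rw [hadj] at h
    obtain ⟨hne, h | h⟩ := h
    · have := hpA w _ h
      simpa using this
    · have := hpA u _ h
      simp only [Equiv.apply_symm_apply] at this
      exact this.symm
  · refine ⟨fun v => Set.Icc (((p v : Fin n) : ℕ) : ℝ) (((σ.symm v : Fin n) : ℕ) : ℝ), ?_, ?_⟩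
    · intro v
      refine ⟨_, _, ?_, rfl⟩
      exact_mod_cast Fin.le_def.mp (hpC v)
    · intro u v hne
      rw [SimpleGraph.compl_adj, hadj, Set.Icc_inter_Icc, Set.nonempty_Icc,
        sup_le_iff, le_inf_iff, le_inf_iff]
      have c1 : ((p u : ℕ) : ℝ) ≤ ((σ.symm u : ℕ) : ℝ) := by
        exact_mod_cast Fin.le_def.mp (hpC u)
      have c2 : ((p v : ℕ) : ℝ) ≤ ((σ.symm v : ℕ) : ℝ) := by
        exact_mod_cast Fin.le_def.mp (hpC v)
      constructor
      · rintro ⟨-, h⟩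
        push_neg at h
        obtain ⟨h1, h2⟩ := h hne
        have d1 : ((p v : ℕ) : ℝ) ≤ ((σ.symm u : ℕ) : ℝ) := by
          exact_mod_cast Fin.le_def.mp h1
        have d2 : ((p u : ℕ) : ℝ) ≤ ((σ.symm v : ℕ) : ℝ) := by
          exact_mod_cast Fin.le_def.mp h2
        exact ⟨⟨c1, d2⟩, d1, c2⟩
      · rintro ⟨⟨-, d2⟩, d1, -⟩
        refine ⟨hne, ?_⟩
        rintro ⟨-, h | h⟩
        · have : ((p v : ℕ) : ℝ) ≤ ((σ.symm u : ℕ) : ℝ) := d1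
          have hlt : (σ.symm u : ℕ) < (p v : ℕ) := Fin.lt_def.mp h
          have : ((σ.symm u : ℕ) : ℝ) < ((p v : ℕ) : ℝ) := by exact_mod_cast hlt
          linarith
        · have hlt : (σ.symm v : ℕ) < (p u : ℕ) := Fin.lt_def.mp h
          have : ((σ.symm v : ℕ) : ℝ) < ((p u : ℕ) : ℝ) := by exact_mod_cast hlt
          linarith

/-- For any ordering `σ` of `V`, `G^σ` is an interval-order subgraph of `G`; conversely, every
maximal interval-order subgraph of `G` is `G^σ` for some ordering `σ` of `V`. -/
theorem orderGraph_isIntervalOrder_and_maximal_eq_orderGraph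
    {V : Type*} [Fintype V] (G : SimpleGraph V) (n : ℕ) (hn : Fintype.card V = n) :
    (∀ σ : Fin n ≃ V, orderGraph G σ ≤ G ∧ (orderGraph G σ).IsIntervalOrderGraph) ∧
    (∀ H : SimpleGraph V,
      Maximal (fun H' : SimpleGraph V => H' ≤ G ∧ H'.IsIntervalOrderGraph) H →
      ∃ σ : Fin n ≃ V, H = orderGraph G σ) := by
  classical
  refine ⟨fun σ => orderGraph_key G σ, ?_⟩
  intro H hH
  obtain ⟨⟨hHG, I, hIcc, hIadj⟩, hmax⟩ := hH
  choose a b hab hI using hIcc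
  -- sort vertices by increasing right endpoint
  let e : V ≃ Fin n := Fintype.equivFinOfCardEq hn
  let f : Fin n → ℝ := fun i => b (e.symm i)
  let σ : Fin n ≃ V := (Tuple.sort f).trans e.symm
  have hmono : ∀ l i : Fin n, l ≤ i → b (σ l) ≤ b (σ i) := by
    intro l i hli
    exact Tuple.monotone_sort f hli
  have key : ∀ x y : V, H.Adj x y → b x < a y →
      ∃ i : Fin n, x = σ i ∧ ∀ l : Fin n, l ≤ i → G.Adj (σ l) y := by
    intro x y hxy hlt
    refine ⟨σ.symm x, (σ.apply_symm_apply x).symm, ?_⟩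
    intro l hl
    have hbz : b (σ l) ≤ b x := by
      have := hmono l (σ.symm x) hl
      rwa [σ.apply_symm_apply] at this
    by_cases hz : σ l = x
    · rw [hz]; exact hHG hxy
    · have hay : a y ≤ b y := hab y
      have hzy : σ l ≠ y := by
        intro h
        rw [h] at hbz
        linarith
      by_contra hGz
      have hHz : ¬ H.Adj (σ l) y := fun h => hGz (hHG h)
      have hint : (I (σ l) ∩ I y).Nonempty :=
        (hIadj (σ l) y hzy).mp ((SimpleGraph.compl_adj H (σ l) y).mpr ⟨hzy, hHz⟩)
      obtain ⟨c, hc1, hc2⟩ := hint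
      rw [hI] at hc1 hc2
      have : a y ≤ c := hc2.1
      have : c ≤ b (σ l) := hc1.2
      linarith
  have hsub : H ≤ orderGraph G σ := by
    intro u w huw
    have hne := huw.ne
    have hdisj : ¬ (I u ∩ I w).Nonempty := by
      intro h
      have := (hIadj u w hne).mpr h
      exact ((SimpleGraph.compl_adj H u w).mp this).2 huw
    rw [hI, hI, Set.Icc_inter_Icc, Set.nonempty_Icc] at hdisj
    push_neg at hdisj
    have hcase : b u < a w ∨ b w < a u := by
      rcases min_lt_iff.mp (lt_of_lt_of_le (lt_of_le_of_lt (le_refl _) hdisj)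
        (le_refl _)) with h | h
      · rcases lt_max_iff.mp (lt_of_lt_of_le h (le_refl _)) with h' | h'
        · exact absurd h' (not_lt.mpr (hab u))
        · exact Or.inl h'
      · rcases lt_max_iff.mp (lt_of_lt_of_le h (le_refl _)) with h' | h'
        · exact Or.inr h'
        · exact absurd h' (not_lt.mpr (hab w))
    rw [orderGraph, SimpleGraph.fromRel_adj]
    refine ⟨hne, ?_⟩
    rcases hcase with h | h
    · exact Or.inl (key u w huw h)
    · exact Or.inr (key w u huw.symm h)
  have hle := hmax ⟨(orderGraph_key G σ).1, (orderGraph_key G σ).2⟩ hsub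
  exact ⟨σ, le_antisymm hsub hle⟩
end

section
/- Let n ≥ 5 and let H be a maximal interval-order subgraph of the line graph L(K_n). Then there exist three distinct vertices a, b, c of K_n such that δ_{ab} ∪ δ_{ac} ⊆ E(H). -/
namespace LineGraphComplete

variable {n : ℕ}

/-- The vertex type of `L(K_n)`: the edges of the complete graph `K_n`. -/
abbrev EKn (n : ℕ) := (⊤ : SimpleGraph (Fin n)).edgeSet

/-- `δ_{uv}`: the edges of `L(K_n)` joining the edge `uv` to the other edges of `K_n`
incident to `u` or to `v` (the star of centre `uv`). -/
def delta (u v : Fin n) : SimpleGraph (EKn n) :=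
  SimpleGraph.fromRel (fun e f =>
    (e : Sym2 (Fin n)) = s(u, v) ∧ (u ∈ (f : Sym2 (Fin n)) ∨ v ∈ (f : Sym2 (Fin n))))

/-! ### Auxiliary notions -/

/-- Two edges of `K_n` share a vertex. -/
def Share (e f : EKn n) : Prop :=
  ∃ x : Fin n, x ∈ (e : Sym2 (Fin n)) ∧ x ∈ (f : Sym2 (Fin n))

lemma Share.symm {e f : EKn n} (h : Share e f) : Share f e := by
  obtain ⟨x, h1, h2⟩ := h; exact ⟨x, h2, h1⟩

lemma lineGraph_adj_of_share {e f : EKn n} (hne : e ≠ f) (h : Share e f) :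
    ((⊤ : SimpleGraph (Fin n)).lineGraph).Adj e f := by
  rw [SimpleGraph.lineGraph_adj_iff_exists]
  exact ⟨hne, h⟩

lemma share_of_lineGraph_adj {e f : EKn n}
    (h : ((⊤ : SimpleGraph (Fin n)).lineGraph).Adj e f) : Share e f := by
  rw [SimpleGraph.lineGraph_adj_iff_exists] at h
  exact h.2

lemma coe_exists (e : EKn n) : ∃ a b : Fin n, (e : Sym2 (Fin n)) = s(a, b) := by
  induction (e : Sym2 (Fin n)) using Sym2.ind with
  | _ x y => exact ⟨x, y, rfl⟩

lemma coe_ne {e : EKn n} {a b : Fin n} (h : (e : Sym2 (Fin n)) = s(a, b)) : a ≠ b := by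
  have he := e.2
  rw [h, SimpleGraph.mem_edgeSet] at he
  exact he

/-- Construct an edge of `K_n` from two distinct vertices. -/
def mkE {x y : Fin n} (h : x ≠ y) : EKn n :=
  ⟨s(x, y), by rw [SimpleGraph.mem_edgeSet]; exact h⟩

lemma mkE_coe {x y : Fin n} (h : x ≠ y) : ((mkE h : EKn n) : Sym2 (Fin n)) = s(x, y) := rfl

lemma exists_two_outside (hn : 5 ≤ n) (x y : Fin n) :
    ∃ c d : Fin n, c ≠ d ∧ c ≠ x ∧ c ≠ y ∧ d ≠ x ∧ d ≠ y := by
  have h1 : ({x, y} : Finset (Fin n)).card ≤ 2 := by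
    apply (Finset.card_insert_le _ _).trans
    simp
  have h2 : (({x, y}ᶜ : Finset (Fin n))).card = n - ({x, y} : Finset (Fin n)).card := by
    rw [Finset.card_compl, Fintype.card_fin]
  have h3 : 1 < (({x, y}ᶜ : Finset (Fin n))).card := by omega
  obtain ⟨c, hc, d, hd, hcd⟩ := Finset.one_lt_card.mp h3
  simp only [Finset.mem_compl, Finset.mem_insert, Finset.mem_singleton, not_or] at hc hd
  exact ⟨c, d, hcd, hc.1, hc.2, hd.1, hd.2⟩

lemma exists_disjoint_edge (hn : 5 ≤ n) (v : EKn n) : ∃ g : EKn n, ¬ Share g v := by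
  obtain ⟨x, y, hxy⟩ := coe_exists v
  obtain ⟨c, d, hcd, hcx, hcy, hdx, hdy⟩ := exists_two_outside hn x y
  refine ⟨mkE hcd, ?_⟩
  rintro ⟨z, hz1, hz2⟩
  rw [mkE_coe, Sym2.mem_iff] at hz1
  rw [hxy, Sym2.mem_iff] at hz2
  rcases hz1 with rfl | rfl <;> rcases hz2 with rfl | rfl <;> simp_all

/-! ### Interval representations via endpoint functions -/

/-- `l, r` give the endpoints of an interval representation of `Hᶜ`. -/
def IsRep (H : SimpleGraph (EKn n)) (l r : EKn n → ℝ) : Prop :=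
  (∀ v, l v ≤ r v) ∧
    ∀ u v : EKn n, u ≠ v → (¬ H.Adj u v ↔ (l u ≤ r v ∧ l v ≤ r u))

lemma exists_rep {H : SimpleGraph (EKn n)} (h : H.IsIntervalOrderGraph) :
    ∃ l r : EKn n → ℝ, IsRep H l r := by
  obtain ⟨I, hI, hadj⟩ := h
  choose l r hle hIcc using hI
  refine ⟨l, r, hle, fun u v huv => ?_⟩
  have h2 := hadj u v huv
  rw [SimpleGraph.compl_adj] at h2
  have key : ¬ H.Adj u v ↔ (I u ∩ I v).Nonempty := by
    constructor
    · intro hna; exact h2.mp ⟨huv, hna⟩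
    · intro hne hA; exact (h2.mpr hne).2 hA
  rw [key, hIcc, hIcc, Set.Icc_inter_Icc, Set.nonempty_Icc, sup_le_iff, le_inf_iff, le_inf_iff]
  exact ⟨fun h => ⟨h.1.2, h.2.1⟩, fun h => ⟨⟨hle u, h.1⟩, h.2, hle v⟩⟩

lemma isIntervalOrderGraph_of_rep {H : SimpleGraph (EKn n)} {l r : EKn n → ℝ}
    (h : IsRep H l r) : H.IsIntervalOrderGraph := by
  refine ⟨fun v => Set.Icc (l v) (r v), fun v => ⟨l v, r v, h.1 v, rfl⟩, fun u v huv => ?_⟩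
  rw [SimpleGraph.compl_adj, Set.Icc_inter_Icc, Set.nonempty_Icc, sup_le_iff, le_inf_iff,
    le_inf_iff]
  constructor
  · rintro ⟨-, hna⟩
    obtain ⟨h1, h2⟩ := (h.2 u v huv).mp hna
    exact ⟨⟨h.1 u, h1⟩, h2, h.1 v⟩
  · intro hx
    exact ⟨huv, (h.2 u v huv).mpr ⟨hx.1.2, hx.2.1⟩⟩

lemma adj_sep {H : SimpleGraph (EKn n)} {l r : EKn n → ℝ} (h : IsRep H l r)
    {u v : EKn n} (hadj : H.Adj u v) : r v < l u ∨ r u < l v := by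
  have huv : u ≠ v := hadj.ne
  by_contra hc
  push_neg at hc
  exact ((h.2 u v huv).mpr hc) hadj

/-! ### The surgery lemma, from maximality -/

lemma rightmin_bound (hn : 5 ≤ n) {H : SimpleGraph (EKn n)}
    (hH : Maximal (fun H' : SimpleGraph (EKn n) =>
      H' ≤ (⊤ : SimpleGraph (Fin n)).lineGraph ∧ H'.IsIntervalOrderGraph) H)
    {l r : EKn n → ℝ} (hrep : IsRep H l r) (v f : EKn n) (hvf : f ≠ v)
    (h1 : l f ≤ r v) (h2 : l v ≤ r f) :
    r v ≤ r f ∨ ∃ g : EKn n, ¬ Share g v ∧ r g ≤ r f := by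
  by_contra hcon
  push_neg at hcon
  obtain ⟨hrv, hD⟩ := hcon
  -- minimum of r over edges disjoint from v
  obtain ⟨g₁, hg₁⟩ := exists_disjoint_edge hn v
  obtain ⟨g₀, hg₀D, hg₀min⟩ :=
    Set.exists_min_image {g : EKn n | ¬ Share g v} r (Set.toFinite _) ⟨g₁, hg₁⟩
  set t : ℝ := max (l v) (min (r v) (r g₀)) with ht
  have hlvt : l v ≤ t := le_max_left _ _
  have htrv : t ≤ r v := max_le (hrep.1 v) (min_le_left _ _)
  set l₂ : EKn n → ℝ := Function.update l v t with hl₂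
  have hl₂v : l₂ v = t := Function.update_self v t l
  have hl₂ne : ∀ u, u ≠ v → l₂ u = l u := fun u hu => Function.update_of_ne hu t l
  have hmono : ∀ u, l u ≤ l₂ u := by
    intro u
    by_cases hu : u = v
    · subst hu; rw [hl₂v]; exact hlvt
    · rw [hl₂ne u hu]
  set H' : SimpleGraph (EKn n) :=
    { Adj := fun u w => u ≠ w ∧ ¬ (l₂ u ≤ r w ∧ l₂ w ≤ r u),
      symm := by
        constructor
        rintro u w ⟨hne, hP⟩
        exact ⟨hne.symm, fun hc => hP ⟨hc.2, hc.1⟩⟩,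
      loopless := ⟨fun u h => h.1 rfl⟩ } with hH'
  have hrep' : IsRep H' l₂ r := by
    constructor
    · intro u
      by_cases hu : u = v
      · subst hu; rw [hl₂v]; exact htrv
      · rw [hl₂ne u hu]; exact hrep.1 u
    · intro u w huw
      constructor
      · intro hna
        by_contra hP
        exact hna ⟨huw, hP⟩
      · rintro hP ⟨-, hP'⟩
        exact hP' hP
  have hHle : H ≤ H' := by
    intro u w h
    refine ⟨h.ne, fun hc => ?_⟩
    exact ((hrep.2 u w h.ne).mpr ⟨(hmono u).trans hc.1, (hmono w).trans hc.2⟩) h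
  have key : ∀ u w : EKn n, u ≠ w → r w < l₂ u →
      ((⊤ : SimpleGraph (Fin n)).lineGraph).Adj u w := by
    intro u w huw hlt
    by_cases hu : u = v
    · rw [hu] at hlt huw ⊢
      rw [hl₂v] at hlt
      rcases lt_max_iff.mp hlt with hl | hm
      · -- r w < l v : old intervals already disjoint, so H.Adj v w
        have : H.Adj v w := by
          by_contra hna
          exact absurd ((hrep.2 v w huw).mp hna).1 (not_le.mpr hl)
        exact hH.1.1 this
      · -- r w < min (r v) (r g₀) : w must share a vertex with v
        have hw : Share w v := by
          by_contra hsh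
          exact absurd (hg₀min w hsh) (not_le.mpr ((lt_min_iff.mp hm).2))
        obtain ⟨x, hx1, hx2⟩ := hw
        exact lineGraph_adj_of_share huw ⟨x, hx2, hx1⟩
    · rw [hl₂ne u hu] at hlt
      have : H.Adj u w := by
        by_contra hna
        exact absurd ((hrep.2 u w huw).mp hna).1 (not_le.mpr hlt)
      exact hH.1.1 this
  have hH'le : H' ≤ (⊤ : SimpleGraph (Fin n)).lineGraph := by
    rintro u w ⟨huw, hP⟩
    rw [not_and_or, not_le, not_le] at hP
    rcases hP with h | h
    · exact key u w huw h
    · exact (key w u huw.symm h).symm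
  have hH'P : H' ≤ (⊤ : SimpleGraph (Fin n)).lineGraph ∧ H'.IsIntervalOrderGraph :=
    ⟨hH'le, isIntervalOrderGraph_of_rep hrep'⟩
  have hsub : H' ≤ H := hH.2 hH'P hHle
  have hadj' : H'.Adj v f := by
    refine ⟨hvf.symm, fun hc => ?_⟩
    rw [hl₂v] at hc
    have : r f < t := lt_of_lt_of_le (lt_min_iff.mpr ⟨hrv, hD g₀ hg₀D⟩) (le_max_right _ _)
    exact absurd hc.1 (not_le.mpr this)
  exact ((hrep.2 v f hvf.symm).mpr ⟨h2, h1⟩) (hsub hadj')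

/-! ### Cleanliness of the extremal edge -/

lemma clean_of_min (hn : 5 ≤ n) {H : SimpleGraph (EKn n)}
    (hH : Maximal (fun H' : SimpleGraph (EKn n) =>
      H' ≤ (⊤ : SimpleGraph (Fin n)).lineGraph ∧ H'.IsIntervalOrderGraph) H)
    {l r : EKn n → ℝ} (hrep : IsRep H l r) (hrinj : Function.Injective r)
    {e1 : EKn n} (hmin : ∀ f, r e1 ≤ r f)
    {f : EKn n} (hne : f ≠ e1) (hsh : Share e1 f) : H.Adj e1 f := by
  by_contra hna
  obtain ⟨hi1, hi2⟩ := (hrep.2 e1 f (Ne.symm hne)).mp hna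
  rcases rightmin_bound hn hH hrep f e1 (Ne.symm hne) hi1 hi2 with h | ⟨g, hgsh, hgle⟩
  · exact hne (hrinj (le_antisymm (hmin f) h).symm)
  · have : g = e1 := hrinj (le_antisymm hgle (hmin g))
    subst this
    exact hgsh hsh

/-! ### Perturbing a representation to have injective endpoint functions -/

lemma exists_good_rep {H : SimpleGraph (EKn n)} {l r : EKn n → ℝ} (hrep : IsRep H l r) :
    ∃ l' r' : EKn n → ℝ, IsRep H l' r' ∧ Function.Injective l' ∧ Function.Injective r' := by
  classical
  -- an injective map into (0, 1]
  obtain ⟨g, hg⟩ := Countable.exists_injective_nat (EKn n)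
  set c : EKn n → ℝ := fun v => ((g v : ℝ) + 1)⁻¹ with hc
  have hcpos : ∀ v, 0 < c v := by
    intro v; rw [hc]; positivity
  have hcle : ∀ v, c v ≤ 1 := by
    intro v
    rw [hc]
    apply inv_le_one_of_one_le₀
    have : (0 : ℝ) ≤ (g v : ℝ) := Nat.cast_nonneg _
    linarith
  have hcinj : Function.Injective c := by
    intro u v h
    rw [hc] at h
    simp only [inv_inj] at h
    have : (g u : ℝ) = g v := by linarith
    exact hg (Nat.cast_injective this)
  -- gap bound
  set P : Set ℝ := Set.range l ∪ Set.range r with hP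
  have hPfin : P.Finite := (Set.finite_range l).union (Set.finite_range r)
  obtain ⟨δ₀, hδ₀pos, hδ₀⟩ :
      ∃ δ₀ : ℝ, 0 < δ₀ ∧ ∀ x ∈ P, ∀ y ∈ P, x < y → δ₀ ≤ y - x := by
    set S : Set ℝ := {d : ℝ | ∃ x ∈ P, ∃ y ∈ P, x < y ∧ d = y - x} with hS
    have hSfin : S.Finite := by
      apply Set.Finite.subset ((hPfin.prod hPfin).image (fun p : ℝ × ℝ => p.2 - p.1))
      rintro d ⟨x, hx, y, hy, hxy, rfl⟩
      exact ⟨(x, y), ⟨hx, hy⟩, rfl⟩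
    rcases Set.eq_empty_or_nonempty S with hSe | hSne
    · refine ⟨1, one_pos, fun x hx y hy hxy => ?_⟩
      exact absurd (show (y - x) ∈ S from ⟨x, hx, y, hy, hxy, rfl⟩) (by rw [hSe]; simp)
    · obtain ⟨d₀, hd₀S, hmin⟩ := Set.exists_min_image S id hSfin hSne
      obtain ⟨x, hx, y, hy, hxy, rfl⟩ := hd₀S
      exact ⟨y - x, by linarith, fun a ha b hb hab => hmin _ ⟨a, ha, b, hb, hab, rfl⟩⟩
  set δ : ℝ := δ₀ / 4 with hδ
  have hδpos : 0 < δ := by rw [hδ]; linarith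
  have h4δ : 4 * δ = δ₀ := by rw [hδ]; ring
  have hb : ∀ w : EKn n, 0 ≤ δ * c w ∧ δ * c w ≤ δ := by
    intro w
    constructor
    · exact le_of_lt (mul_pos hδpos (hcpos w))
    · have := mul_le_mul_of_nonneg_left (hcle w) (le_of_lt hδpos)
      linarith
  have key : ∀ a b : EKn n, l a ≤ r b ↔ l a - δ * c a ≤ r b + δ * c b := by
    intro a b
    constructor
    · intro h
      have h1 := (hb a).1
      have h2 := (hb b).1
      linarith
    · intro h
      by_contra hlt
      push_neg at hlt
      have hgap : δ₀ ≤ l a - r b :=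
        hδ₀ (r b) (Or.inr ⟨b, rfl⟩) (l a) (Or.inl ⟨a, rfl⟩) hlt
      have h1 := (hb a).2
      have h2 := (hb b).2
      linarith
  refine ⟨fun v => l v - δ * c v, fun v => r v + δ * c v, ⟨?_, ?_⟩, ?_, ?_⟩
  · intro v
    show l v - δ * c v ≤ r v + δ * c v
    have h1 := (hb v).1
    have := hrep.1 v
    linarith
  · intro u v huv
    show ¬H.Adj u v ↔ (l u - δ * c u ≤ r v + δ * c v ∧ l v - δ * c v ≤ r u + δ * c u)
    rw [hrep.2 u v huv, key u v, key v u]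
  · -- injective l'
    intro u v h
    by_contra hne
    simp only at h
    rcases lt_trichotomy (l u) (l v) with hlt | heq | hlt
    · have hgap : δ₀ ≤ l v - l u := hδ₀ (l u) (Or.inl ⟨u, rfl⟩) (l v) (Or.inl ⟨v, rfl⟩) hlt
      have h1 := (hb u).1
      have h2 := (hb v).2
      linarith
    · have : δ * c u = δ * c v := by linarith
      exact hne (hcinj (mul_left_cancel₀ (ne_of_gt hδpos) this))
    · have hgap : δ₀ ≤ l u - l v := hδ₀ (l v) (Or.inl ⟨v, rfl⟩) (l u) (Or.inl ⟨u, rfl⟩) hlt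
      have h1 := (hb v).1
      have h2 := (hb u).2
      linarith
  · -- injective r'
    intro u v h
    by_contra hne
    simp only at h
    rcases lt_trichotomy (r u) (r v) with hlt | heq | hlt
    · have hgap : δ₀ ≤ r v - r u := hδ₀ (r u) (Or.inr ⟨u, rfl⟩) (r v) (Or.inr ⟨v, rfl⟩) hlt
      have h1 := (hb v).1
      have h2 := (hb u).2
      linarith
    · have : δ * c u = δ * c v := by linarith
      exact hne (hcinj (mul_left_cancel₀ (ne_of_gt hδpos) this))
    · have hgap : δ₀ ≤ r u - r v := hδ₀ (r v) (Or.inr ⟨v, rfl⟩) (r u) (Or.inr ⟨u, rfl⟩) hlt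
      have h1 := (hb u).1
      have h2 := (hb v).2
      linarith

/-! ### Main theorem -/

/-- For `n ≥ 5`, every maximal interval-order subgraph `H` of `L(K_n)` contains
`δ_{ab} ∪ δ_{ac}` for some three distinct vertices `a, b, c` of `K_n`. -/
theorem delta_sup_delta_le_maximal_intervalOrder_subgraph (hn : 5 ≤ n)
    (H : SimpleGraph (EKn n))
    (hH : Maximal (fun H' : SimpleGraph (EKn n) =>
      H' ≤ (⊤ : SimpleGraph (Fin n)).lineGraph ∧ H'.IsIntervalOrderGraph) H) :
    ∃ a b c : Fin n, a ≠ b ∧ a ≠ c ∧ b ≠ c ∧ delta a b ⊔ delta a c ≤ H := by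
  obtain ⟨l₀, r₀, hrep₀⟩ := exists_rep hH.1.2
  obtain ⟨l, r, hrep, hlinj, hrinj⟩ := exists_good_rep hrep₀
  have h01 : (⟨0, by omega⟩ : Fin n) ≠ ⟨1, by omega⟩ := by
    intro h
    have h2 : (0 : ℕ) = 1 := congrArg Fin.val h
    exact absurd h2 Nat.zero_ne_one
  haveI : Nonempty (EKn n) := ⟨mkE h01⟩
  obtain ⟨e1, hmin⟩ := Finite.exists_min r
  -- the reflected representation
  have hrep2 : IsRep H (fun v => -(r v)) (fun v => -(l v)) := by
    refine ⟨fun v => neg_le_neg (hrep.1 v), fun u v huv => ?_⟩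
    show ¬H.Adj u v ↔ (-(r u) ≤ -(l v) ∧ -(r v) ≤ -(l u))
    rw [hrep.2 u v huv]
    constructor
    · rintro ⟨a, b⟩
      constructor <;> linarith
    · rintro ⟨a, b⟩
      constructor <;> linarith
  have hl2inj : Function.Injective (fun v : EKn n => -(l v)) := by
    intro a b h
    simp only at h
    exact hlinj (by linarith)
  obtain ⟨e2, hmax⟩ := Finite.exists_min (fun v : EKn n => -(l v))
  have hmax' : ∀ f : EKn n, l f ≤ l e2 := by
    intro f
    have := hmax f
    linarith
  have hclean1 : ∀ f : EKn n, f ≠ e1 → Share e1 f → H.Adj e1 f :=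
    fun f h1 h2 => clean_of_min hn hH hrep hrinj hmin h1 h2
  have hclean2 : ∀ f : EKn n, f ≠ e2 → Share e2 f → H.Adj e2 f :=
    fun f h1 h2 => clean_of_min hn hH hrep2 hl2inj hmax h1 h2
  obtain ⟨a1, b1, he1⟩ := coe_exists e1
  -- e1 ≠ e2
  have hne12 : e1 ≠ e2 := by
    intro h
    obtain ⟨z, w, hzw, hza, hzb, hwa, hwb⟩ := exists_two_outside hn a1 b1
    have haz : a1 ≠ z := Ne.symm hza
    have hfne : mkE haz ≠ e1 := by
      intro hf
      have hz : z ∈ (e1 : Sym2 (Fin n)) := by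
        rw [← hf, mkE_coe]
        exact Sym2.mem_iff.mpr (Or.inr rfl)
      rw [he1, Sym2.mem_iff] at hz
      rcases hz with h' | h'
      · exact hza h'
      · exact hzb h'
    have hsh : Share e1 (mkE haz) := by
      refine ⟨a1, ?_, ?_⟩
      · rw [he1]; exact Sym2.mem_iff.mpr (Or.inl rfl)
      · rw [mkE_coe]; exact Sym2.mem_iff.mpr (Or.inl rfl)
    have hadj := hclean1 (mkE haz) hfne hsh
    rcases adj_sep hrep hadj with hs | hs
    · have h1 := hmin (mkE haz)
      have h2 := hrep.1 e1
      linarith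
    · have h1 := hmax' (mkE haz)
      rw [← h] at h1
      have h2 := hrep.1 e1
      linarith
  -- e1 and e2 share a vertex
  have hsh12 : Share e1 e2 := by
    by_contra hsh
    have hnadj : ¬ H.Adj e1 e2 := fun hA => hsh (share_of_lineGraph_adj (hH.1.1 hA))
    obtain ⟨hi1, hi2⟩ := (hrep.2 e1 e2 hne12).mp hnadj
    obtain ⟨a2, b2, he2⟩ := coe_exists e2
    have ha1e1 : a1 ∈ (e1 : Sym2 (Fin n)) := by
      rw [he1]; exact Sym2.mem_iff.mpr (Or.inl rfl)
    have ha2e2 : a2 ∈ (e2 : Sym2 (Fin n)) := by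
      rw [he2]; exact Sym2.mem_iff.mpr (Or.inl rfl)
    have ha12 : a1 ≠ a2 := by
      intro h
      exact hsh ⟨a1, ha1e1, by rw [h]; exact ha2e2⟩
    have hfne1 : mkE ha12 ≠ e1 := by
      intro hf
      have : a2 ∈ (e1 : Sym2 (Fin n)) := by
        rw [← hf, mkE_coe]; exact Sym2.mem_iff.mpr (Or.inr rfl)
      exact hsh ⟨a2, this, ha2e2⟩
    have hfne2 : mkE ha12 ≠ e2 := by
      intro hf
      have : a1 ∈ (e2 : Sym2 (Fin n)) := by
        rw [← hf, mkE_coe]; exact Sym2.mem_iff.mpr (Or.inl rfl)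
      exact hsh ⟨a1, ha1e1, this⟩
    have hshf1 : Share e1 (mkE ha12) :=
      ⟨a1, ha1e1, by rw [mkE_coe]; exact Sym2.mem_iff.mpr (Or.inl rfl)⟩
    have hshf2 : Share e2 (mkE ha12) :=
      ⟨a2, ha2e2, by rw [mkE_coe]; exact Sym2.mem_iff.mpr (Or.inr rfl)⟩
    have hA1 := hclean1 (mkE ha12) hfne1 hshf1
    have hA2 := hclean2 (mkE ha12) hfne2 hshf2
    have hs1 : r e1 < l (mkE ha12) := by
      rcases adj_sep hrep hA1 with hs | hs
      · have h1 := hmin (mkE ha12)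
        have h2 := hrep.1 e1
        linarith
      · exact hs
    have hs2 : r (mkE ha12) < l e2 := by
      rcases adj_sep hrep hA2 with hs | hs
      · exact hs
      · have h1 := hmax' (mkE ha12)
        have h2 := hrep.1 e2
        linarith
    have h3 := hrep.1 (mkE ha12)
    linarith
  -- extract the three vertices
  obtain ⟨a, ha1, ha2⟩ := hsh12
  obtain ⟨b, hb⟩ := Sym2.mem_iff_exists.mp ha1
  obtain ⟨c, hc⟩ := Sym2.mem_iff_exists.mp ha2
  have hab : a ≠ b := coe_ne hb
  have hac : a ≠ c := coe_ne hc
  have hbc : b ≠ c := by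
    intro h
    apply hne12
    apply Subtype.ext
    rw [hb, hc, h]
  refine ⟨a, b, c, hab, hac, hbc, ?_⟩
  have star : ∀ (E : EKn n) (x y : Fin n), (E : Sym2 (Fin n)) = s(x, y) →
      (∀ f' : EKn n, f' ≠ E → Share E f' → H.Adj E f') →
      ∀ e f : EKn n, (delta x y).Adj e f → H.Adj e f := by
    intro E x y hE hcl e f hadj
    rw [delta, SimpleGraph.fromRel_adj] at hadj
    obtain ⟨hnef, hrel⟩ := hadj
    rcases hrel with ⟨hcoe, hmem⟩ | ⟨hcoe, hmem⟩
    · have heE : e = E := Subtype.ext (by rw [hcoe, hE])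
      have hsh : Share E f := by
        rcases hmem with hm | hm
        · exact ⟨x, by rw [hE]; exact Sym2.mem_iff.mpr (Or.inl rfl), hm⟩
        · exact ⟨y, by rw [hE]; exact Sym2.mem_iff.mpr (Or.inr rfl), hm⟩
      have := hcl f (by rw [← heE]; exact hnef.symm) hsh
      rwa [← heE] at this
    · have hfE : f = E := Subtype.ext (by rw [hcoe, hE])
      have hsh : Share E e := by
        rcases hmem with hm | hm
        · exact ⟨x, by rw [hE]; exact Sym2.mem_iff.mpr (Or.inl rfl), hm⟩
        · exact ⟨y, by rw [hE]; exact Sym2.mem_iff.mpr (Or.inr rfl), hm⟩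
      have h' := (hcl e (by rw [← hfE]; exact hnef) hsh).symm
      rwa [← hfE] at h'
  intro e f hef
  rcases hef with h | h
  · exact star e1 a b hb hclean1 e f h
  · exact star e2 a c hc hclean2 e f h

end LineGraphComplete
end

section
/- For every integer n ≥ 5, the boxicity of the complement of the line graph L(K_n) is at most n − 2. -/
namespace BoxKneserAux

def uu (m : ℕ) : Fin (m+5) := ⟨m+3, by omega⟩
def vv (m : ℕ) : Fin (m+5) := ⟨m+4, by omega⟩

noncomputable def P (m : ℕ) (c : Fin (m+5)) : ℝ := if c = uu m then -1 else ((c : ℕ) : ℝ)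

noncomputable def Q (m : ℕ) : Sym2 (Fin (m+5)) → ℝ :=
  Sym2.lift ⟨fun a b => P m a + P m b, fun a b => add_comm _ _⟩

noncomputable def LO (m : ℕ) (s : Sym2 (Fin (m+5))) : ℝ := if uu m ∈ s then 0 else -1
noncomputable def HI (m : ℕ) (s : Sym2 (Fin (m+5))) : ℝ :=
  if vv m ∈ s then ((m:ℝ)+2) else ((m:ℝ)+4)

def emb (m : ℕ) (k : Fin (m+3)) : Fin (m+5) := ⟨(k:ℕ), by omega⟩

noncomputable def AA (m : ℕ) (e : Sym2 (Fin (m+5))) (k : Fin (m+3)) : ℝ :=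
  if emb m k ∈ e then Q m e - P m (emb m k) else LO m e

noncomputable def BB (m : ℕ) (e : Sym2 (Fin (m+5))) (k : Fin (m+3)) : ℝ :=
  if emb m k ∈ e then Q m e - P m (emb m k) else HI m e

noncomputable def II (m : ℕ) (e : Sym2 (Fin (m+5))) (k : Fin (m+3)) : Set ℝ :=
  Set.Icc (AA m e k) (BB m e k)

lemma Q_mk (m : ℕ) (a b : Fin (m+5)) : Q m s(a,b) = P m a + P m b := by
  simp [Q]

lemma P_uu (m : ℕ) : P m (uu m) = -1 := if_pos rfl

lemma P_vv (m : ℕ) : P m (vv m) = (m:ℝ)+4 := by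
  rw [P, if_neg (by simp [uu, vv, Fin.ext_iff])]
  simp [vv]

lemma P_nonneg (m : ℕ) {c : Fin (m+5)} (h : c ≠ uu m) : 0 ≤ P m c := by
  rw [P, if_neg h]; positivity

lemma P_ge (m : ℕ) (c : Fin (m+5)) : -1 ≤ P m c := by
  by_cases h : c = uu m
  · rw [h, P_uu]
  · exact le_trans (by norm_num) (P_nonneg m h)

lemma P_le (m : ℕ) (c : Fin (m+5)) : P m c ≤ (m:ℝ)+4 := by
  by_cases h : c = uu m
  · rw [h, P_uu]; have : (0:ℝ) ≤ m := Nat.cast_nonneg m; linarith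
  · rw [P, if_neg h]
    have : (c:ℕ) ≤ m+4 := by omega
    calc ((c:ℕ):ℝ) ≤ ((m+4 : ℕ):ℝ) := by exact_mod_cast this
      _ = (m:ℝ)+4 := by push_cast; ring

lemma P_le' (m : ℕ) {c : Fin (m+5)} (h : c ≠ vv m) : P m c ≤ (m:ℝ)+2 := by
  by_cases hc : c = uu m
  · rw [hc, P_uu]; have : (0:ℝ) ≤ m := Nat.cast_nonneg m; linarith
  · rw [P, if_neg hc]
    have h1 : (c:ℕ) ≠ m+3 := fun hh => hc (Fin.ext (by simp [uu, hh]))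
    have h2 : (c:ℕ) ≠ m+4 := fun hh => h (Fin.ext (by simp [vv, hh]))
    have h3 : (c:ℕ) < m+5 := c.isLt
    have : (c:ℕ) ≤ m+2 := by omega
    calc ((c:ℕ):ℝ) ≤ ((m+2 : ℕ):ℝ) := by exact_mod_cast this
      _ = (m:ℝ)+2 := by push_cast; ring

lemma P_inj (m : ℕ) : Function.Injective (P m) := by
  intro c d h
  by_cases hc : c = uu m <;> by_cases hd : d = uu m
  · rw [hc, hd]
  · rw [hc, P_uu, P, if_neg hd] at h
    have := Nat.cast_nonneg (α := ℝ) (d : ℕ); linarith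
  · rw [hd, P_uu, P, if_neg hc] at h
    have := Nat.cast_nonneg (α := ℝ) (c : ℕ); linarith
  · rw [P, P, if_neg hc, if_neg hd] at h
    exact Fin.ext (by exact_mod_cast h)

lemma LO_nonpos (m : ℕ) (s : Sym2 (Fin (m+5))) : LO m s ≤ 0 := by
  rw [LO]; split <;> norm_num

lemma HI_ge (m : ℕ) (s : Sym2 (Fin (m+5))) : (2:ℝ) ≤ HI m s := by
  rw [HI]; have : (0:ℝ) ≤ m := Nat.cast_nonneg m; split <;> linarith

lemma LO_le_HI (m : ℕ) (s : Sym2 (Fin (m+5))) : LO m s ≤ HI m s :=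
  le_trans (LO_nonpos m s) (le_trans (by norm_num) (HI_ge m s))

lemma LO_le_P (m : ℕ) {s : Sym2 (Fin (m+5))} {c : Fin (m+5)} (h : c ∉ s) : LO m s ≤ P m c := by
  rw [LO]; split
  · exact P_nonneg m (fun hc => h (hc ▸ ‹uu m ∈ s›))
  · exact P_ge m c

lemma P_le_HI (m : ℕ) {s : Sym2 (Fin (m+5))} {c : Fin (m+5)} (h : c ∉ s) : P m c ≤ HI m s := by
  rw [HI]; split
  · exact P_le' m (fun hc => h (hc ▸ ‹vv m ∈ s›))
  · exact P_le m c

lemma AA_le_BB (m : ℕ) (e : Sym2 (Fin (m+5))) (k : Fin (m+3)) : AA m e k ≤ BB m e k := by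
  rw [AA, BB]
  by_cases h : emb m k ∈ e
  · rw [if_pos h, if_pos h]
  · rw [if_neg h, if_neg h]; exact LO_le_HI m e


lemma point_val (m : ℕ) {e : Sym2 (Fin (m+5))} {x : Fin (m+5)} (h : x ∈ e) :
    Q m e - P m x = P m (Sym2.Mem.other h) := by
  conv_lhs => rw [← Sym2.other_spec h]
  rw [Q_mk]; ring

lemma II_of_mem (m : ℕ) {e : Sym2 (Fin (m+5))} {k : Fin (m+3)} (h : emb m k ∈ e) :
    II m e k = {P m (Sym2.Mem.other h)} := by
  rw [II, AA, BB, if_pos h, if_pos h, point_val m h, Set.Icc_self]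

lemma II_of_not_mem (m : ℕ) {e : Sym2 (Fin (m+5))} {k : Fin (m+3)} (h : emb m k ∉ e) :
    II m e k = Set.Icc (LO m e) (HI m e) := by
  rw [II, AA, BB, if_neg h, if_neg h]

lemma inter_nonempty (m : ℕ) (e f : Sym2 (Fin (m+5)))
    (hdisj : ∀ x, x ∈ e → x ∉ f) (k : Fin (m+3)) :
    (II m e k ∩ II m f k).Nonempty := by
  by_cases h1 : emb m k ∈ e <;> by_cases h2 : emb m k ∈ f
  · exact absurd h2 (hdisj _ h1)
  · refine ⟨P m (Sym2.Mem.other h1), ?_, ?_⟩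
    · rw [II_of_mem m h1]; exact rfl
    · rw [II_of_not_mem m h2]
      have hcf : Sym2.Mem.other h1 ∉ f := hdisj _ (Sym2.other_mem h1)
      exact ⟨LO_le_P m hcf, P_le_HI m hcf⟩
  · refine ⟨P m (Sym2.Mem.other h2), ?_, ?_⟩
    · rw [II_of_not_mem m h1]
      have hcf : Sym2.Mem.other h2 ∉ e := fun hc => hdisj _ hc (Sym2.other_mem h2)
      exact ⟨LO_le_P m hcf, P_le_HI m hcf⟩
    · rw [II_of_mem m h2]; exact rfl
  · refine ⟨0, ?_, ?_⟩ <;> rw [II_of_not_mem m ‹_›] <;>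
      exact ⟨LO_nonpos m _, le_trans (by norm_num) (HI_ge m _)⟩

lemma sep1 (m : ℕ) (x a b : Fin (m+5)) (hx : (x:ℕ) < m+3) (e f : Sym2 (Fin (m+5)))
    (he : s(x,a) = e) (hf : s(x,b) = f) (hab : a ≠ b) :
    ∃ k, ¬ (II m e k ∩ II m f k).Nonempty := by
  refine ⟨⟨(x:ℕ), hx⟩, ?_⟩
  have hemb : emb m ⟨(x:ℕ), hx⟩ = x := rfl
  have h1 : emb m ⟨(x:ℕ), hx⟩ ∈ e := by rw [hemb, ← he]; exact Sym2.mem_mk_left x a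
  have h2 : emb m ⟨(x:ℕ), hx⟩ ∈ f := by rw [hemb, ← hf]; exact Sym2.mem_mk_left x b
  rintro ⟨y, hy1, hy2⟩
  rw [II_of_mem m h1, Set.mem_singleton_iff] at hy1
  rw [II_of_mem m h2, Set.mem_singleton_iff] at hy2
  have hpa : P m (Sym2.Mem.other h1) = P m a := by
    rw [← point_val m h1, hemb, ← he, Q_mk]; ring
  have hpb : P m (Sym2.Mem.other h2) = P m b := by
    rw [← point_val m h2, hemb, ← hf, Q_mk]; ring
  apply hab
  apply P_inj m
  rw [← hpa, ← hpb, ← hy1, ← hy2]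

lemma sepU (m : ℕ) (a b : Fin (m+5)) (e f : Sym2 (Fin (m+5)))
    (he : s(uu m, a) = e) (hf : s(uu m, b) = f)
    (ha1 : a ≠ uu m) (ha2 : a ≠ vv m) (hab : a ≠ b) :
    ∃ k, ¬ (II m e k ∩ II m f k).Nonempty := by
  have hx : (a:ℕ) < m+3 := by
    have h1 : (a:ℕ) ≠ m+3 := fun hh => ha1 (Fin.ext (by simp [uu, hh]))
    have h2 : (a:ℕ) ≠ m+4 := fun hh => ha2 (Fin.ext (by simp [vv, hh]))
    have := a.isLt; omega
  refine ⟨⟨(a:ℕ), hx⟩, ?_⟩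
  have hemb : emb m ⟨(a:ℕ), hx⟩ = a := rfl
  have h1 : emb m ⟨(a:ℕ), hx⟩ ∈ e := by rw [hemb, ← he]; exact Sym2.mem_mk_right (uu m) a
  have h2 : emb m ⟨(a:ℕ), hx⟩ ∉ f := by
    rw [hemb, ← hf, Sym2.mem_iff]
    rintro (h | h)
    · exact ha1 h
    · exact hab h
  rintro ⟨y, hy1, hy2⟩
  rw [II_of_mem m h1, Set.mem_singleton_iff] at hy1
  rw [II_of_not_mem m h2] at hy2
  have hpa : P m (Sym2.Mem.other h1) = -1 := by
    rw [← point_val m h1, hemb, ← he, Q_mk, P_uu]; ring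
  have hlo : LO m f = 0 := by
    rw [LO, if_pos]; rw [← hf]; exact Sym2.mem_mk_left (uu m) b
  rw [hpa] at hy1
  rw [hlo] at hy2
  have := hy2.1
  linarith [hy1 ▸ this]

lemma sepV (m : ℕ) (a b : Fin (m+5)) (e f : Sym2 (Fin (m+5)))
    (he : s(vv m, a) = e) (hf : s(vv m, b) = f)
    (ha1 : a ≠ uu m) (ha2 : a ≠ vv m) (hab : a ≠ b) :
    ∃ k, ¬ (II m e k ∩ II m f k).Nonempty := by
  have hx : (a:ℕ) < m+3 := by
    have h1 : (a:ℕ) ≠ m+3 := fun hh => ha1 (Fin.ext (by simp [uu, hh]))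
    have h2 : (a:ℕ) ≠ m+4 := fun hh => ha2 (Fin.ext (by simp [vv, hh]))
    have := a.isLt; omega
  refine ⟨⟨(a:ℕ), hx⟩, ?_⟩
  have hemb : emb m ⟨(a:ℕ), hx⟩ = a := rfl
  have h1 : emb m ⟨(a:ℕ), hx⟩ ∈ e := by rw [hemb, ← he]; exact Sym2.mem_mk_right (vv m) a
  have h2 : emb m ⟨(a:ℕ), hx⟩ ∉ f := by
    rw [hemb, ← hf, Sym2.mem_iff]
    rintro (h | h)
    · exact ha2 h
    · exact hab h
  rintro ⟨y, hy1, hy2⟩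
  rw [II_of_mem m h1, Set.mem_singleton_iff] at hy1
  rw [II_of_not_mem m h2] at hy2
  have hpa : P m (Sym2.Mem.other h1) = (m:ℝ)+4 := by
    rw [← point_val m h1, hemb, ← he, Q_mk, P_vv]; ring
  have hhi : HI m f = (m:ℝ)+2 := by
    rw [HI, if_pos]; rw [← hf]; exact Sym2.mem_mk_left (vv m) b
  rw [hpa] at hy1
  rw [hhi] at hy2
  have h4 := hy2.2
  rw [hy1] at h4
  linarith

lemma sep (m : ℕ) (e f : Sym2 (Fin (m+5))) (hne : e ≠ f)
    (hde : ¬ e.IsDiag) (hdf : ¬ f.IsDiag)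
    (x : Fin (m+5)) (hxe : x ∈ e) (hxf : x ∈ f) :
    ∃ k, ¬ (II m e k ∩ II m f k).Nonempty := by
  set a := Sym2.Mem.other hxe with hadef
  set b := Sym2.Mem.other hxf with hbdef
  have he : s(x, a) = e := Sym2.other_spec hxe
  have hf : s(x, b) = f := Sym2.other_spec hxf
  have hab : a ≠ b := by
    intro h; apply hne; rw [← he, ← hf, h]
  have hax : a ≠ x := Sym2.other_ne hde hxe
  have hbx : b ≠ x := Sym2.other_ne hdf hxf
  have htri : (x:ℕ) < m+3 ∨ x = uu m ∨ x = vv m := by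
    have := x.isLt
    rcases Nat.lt_or_ge (x:ℕ) (m+3) with h | h
    · exact Or.inl h
    · rcases Nat.eq_or_lt_of_le h with h' | h'
      · exact Or.inr (Or.inl (Fin.ext h'.symm))
      · refine Or.inr (Or.inr (Fin.ext ?_))
        show (x:ℕ) = m+4
        omega
  rcases htri with hx | hx | hx
  · exact sep1 m x a b hx e f he hf hab
  · subst hx
    by_cases hav : a = vv m
    · have hb1 : b ≠ uu m := hbx
      have hb2 : b ≠ vv m := fun h => hab (hav.trans h.symm)
      obtain ⟨k, hk⟩ := sepU m b a f e hf he hb1 hb2 hab.symm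
      exact ⟨k, fun ⟨y, h1, h2⟩ => hk ⟨y, h2, h1⟩⟩
    · exact sepU m a b e f he hf hax hav hab
  · subst hx
    by_cases hau : a = uu m
    · have hb2 : b ≠ vv m := hbx
      have hb1 : b ≠ uu m := fun h => hab (hau.trans h.symm)
      obtain ⟨k, hk⟩ := sepV m b a f e hf he hb1 hb2 hab.symm
      exact ⟨k, fun ⟨y, h1, h2⟩ => hk ⟨y, h2, h1⟩⟩
    · exact sepV m a b e f he hf hau hax hab

end BoxKneserAux


open BoxKneserAux in
/-- For every `n ≥ 5`, the boxicity of the complement of `L(K_n)` is at most `n - 2`. -/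
theorem boxicity_compl_lineGraph_complete_le (n : ℕ) (hn : 5 ≤ n) :
    ((⊤ : SimpleGraph (Fin n)).lineGraph)ᶜ.boxicity ≤ n - 2 := by
  obtain ⟨m, rfl⟩ : ∃ m, n = m + 5 := ⟨n - 5, by omega⟩
  apply Nat.sInf_le
  rw [show m + 5 - 2 = m + 3 by omega]
  refine ⟨fun e k => II m (↑e) k, ?_, ?_⟩
  · intro e k
    exact ⟨AA m (↑e) k, BB m (↑e) k, AA_le_BB m (↑e) k, rfl⟩
  · intro e f hef
    rw [SimpleGraph.compl_adj, SimpleGraph.lineGraph_adj_iff_exists]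
    constructor
    · rintro ⟨-, h⟩ k
      apply inter_nonempty
      intro x hxe hxf
      exact h ⟨hef, x, hxe, hxf⟩
    · intro hall
      refine ⟨hef, ?_⟩
      rintro ⟨-, x, hxe, hxf⟩
      have hde : ¬ (↑e : Sym2 (Fin (m+5))).IsDiag :=
        SimpleGraph.not_isDiag_of_mem_edgeSet _ e.2
      have hdf : ¬ (↑f : Sym2 (Fin (m+5))).IsDiag :=
        SimpleGraph.not_isDiag_of_mem_edgeSet _ f.2
      have hne : (↑e : Sym2 (Fin (m+5))) ≠ ↑f := fun h => hef (Subtype.ext h)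
      obtain ⟨k, hk⟩ := sep m (↑e) (↑f) hne hde hdf x hxe hxf
      exact hk (hall k)
end

section
/- The boxicity of the complement of the line graph L(K_5) is at least 3. -/
namespace BoxPf

def nbrMask : Nat → Nat
  | 0 => 126
  | 1 => 413
  | 2 => 683
  | 3 => 839
  | 4 => 483
  | 5 => 725
  | 6 => 825
  | 7 => 822
  | 8 => 730
  | 9 => 492
  | _ => 0

def L72 : List Nat := [144291110649483390, 792809456445575294, 144642953825112190, 144291110104494206, 720716678580801662, 216700547829481598, 527765749133438, 792809456982425726, 352737082503294, 792879825189732478, 175922573504638, 144255926277386366, 144255925707239550, 144537400675561598, 144642953791815806, 528109178744958, 893898485886, 550468874366]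

def LFIN : List Nat := [68862505086, 69432651902, 274920271998, 275591360558, 550468874366, 550469267486, 893395415166, 893496225870, 893898485886, 893898879006, 894066372686, 894066503726, 175922573504638, 175922573897758, 352737082503294, 352737082896414, 527765749133438, 527765749526558, 528109178744958, 528109179138078, 72233516611424382, 72410331120427134, 72585359787053182, 72585703216668798, 144150372490309758, 144150373161398318, 144220741226098814, 144255925707239550, 144255926277386366, 144291110104494206, 144291110649483390, 144291110649753654, 144537400675561598, 144642953691164786, 144642953791815806, 144642953825112190, 144642953825382454, 216700547829481598, 216700616414609534, 648519239736504446, 648519240407593006, 648589608480678014, 720716678580801662, 792668718831390846, 792668719502479406, 792669337306534014, 792669337977622574, 792739087567179902, 792739706050707582, 792809456445575294, 792809456982425726, 792809456990703732, 792809456990834742, 792879825189732478, 792879893774860414, 793161300032245874, 793161300166332532, 793161300166463542, 295147975616825290878, 295147976441459011662, 295148010801188991102, 295148186929216254078, 295148187547691397246, 295148257366671519870, 295148257916435587198, 295148257916435722330, 295148327666696220798, 295148433013654057074, 295148433219812475006, 295148433288531828862, 295148433288531963994, 295220490539005657214, 295220490813850271870, 295941066479384936564, 590367868022176100478, 590367868846809821262,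 590367903206548181118, 590872271661477933182, 590872272004907544702, 590944329324235329662, 590944329598979022974, 590944329599113244780, 591016386849553780862, 591088479146927460468, 591088479627955404926, 591088479696549052542, 591088479696683274348, 591088549446272696446, 591088549996565364862, 591088971658737762418, 885443997906397044862, 885515843569568735358, 885515843570138882174, 885515844394202456142, 885515844394772602958, 885515878753932435582, 885515878754510962814, 885516125319414964350, 885516125869170753662, 885516125869178904696, 885516125869179166810, 885516160228942413950, 885516160503787028606, 885516300966397501554, 885516301241275146360, 885516301241275408474, 885660416154473087096, 886020177184260366462, 886092304872198111358, 886092305146539155576, 886092305147034075262, 886092305147076026476, 886092339506235588734, 886092340056528257150, 886092761718700654706, 886236454694890242164, 886236455244109185144, 886236455244646056044, 886236595431833337976, 886236736169321693300, 302231455079579867574294, 302231455256394376572954, 302231455431423043203094, 302231455431766472814618, 302231599546610984841266, 302231599546885829193746, 302232248064957325922354, 302526603336602362474514, 302526603336670947733586, 303116971204623691178066, 604463053957687748751398, 604463558326554994946092, 604463702476034089832486, 604463702476652564975660, 604463702616771578056756, 604463702617321333854244, 604463702968614753685556, 605053998286392795467812, 605053998286461514813540, 605349146262009477595236, 906694364711865377255438,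 906694364711865947402254, 906694364993340353966090, 906694508966897588269110, 906694508966898158415926, 906694508967722221989894, 906694508967722792136710, 906694509002081985523766, 906694509002082522394658, 906694509002082530512950, 906694509002082530775060, 906694509248372556591158, 906694509249197198700546, 906694509283556962234402, 906694509283831806586882, 906694509353925672845366, 906694509353925706141750, 906694509353925706403860, 906694581411519710511158, 906694941172618250825740, 906695085427650461831222, 906695085428475095560196, 906695085462834833936404, 906695085463384589733892, 906695085814678009565204, 906695157520428326604854, 906695157520428863455286, 906695157520428863475746, 906695157590797070762038, 906695157801903303315490, 906989657259105025675280, 907285453330787569111072, 907580025127057768988720, 907580025127057769250832, 907580025127126354116720, 907580025127126354378832, 907580601306335129239600, 907580601306335666110496, 907580601306403714367600, 907580601306404251238496, 618970314790666578908573770, 618970610010558984259383372, 618970905158534531652018250, 618970905158534532222165068, 618970905158816006628466776, 618970905158816007165321288, 618970905158991378724708440, 618970905734995283955425352, 618970905734995283988717672, 618970905879145381558747240, 619272251097594070334599182, 619272251097594688809742350, 619272251097734807822954502, 619272546245780723959492698, 619272546245780724630581258, 619272546245781342434635866, 619272546245781343105724426, 619272546245851161414758490, 619272546245851711170572354, 619272546245851711178825818,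 619272546245851711178956824, 619272546245921461439459418, 619272546245921462118936578, 619272546245991830317854722, 619272546245991898903113794, 619272546246027014555713626, 619272546246027083275067482, 619272546246027083275198488, 619272546318084608593510490, 619272546390142202631577616, 619272547038660274128175216, 619272547038660274128306224, 619272547038660548972789840, 619272547038660548972920848, 619272841393405047515394060, 619273136541591701140283482, 619273136541591701811376136, 619273136541662069884477464, 619273136541662070421331976, 619273136541837441980719128, 619273136613719114158202970, 619273136613719663913992282, 619273136613719663914016834, 619273136613754298530267226, 619273136613859851646558274, 619273137190180416217423936, 619273137334329964064931952, 619273137334330238909546576, 619273137334330513820745824, 619273137334330788665360448, 619574482552498002506182670, 619574482552498345935794190, 619574482696613190582038534, 619574777700403525288620042, 619575073424769113514848364, 619575073424769113515241484, 619575073424769456944459884, 619575073424769456944853004, 619575073496826776272244844, 619575073496827051015938156, 619575073496827051150151748, 619575073496827051150155816, 619575073568884301590696044, 619575073568884301591097348, 619575073640941895628754948, 619575073640941964348100676, 619575073640977079992320108, 619575073640977148585967724, 619575073640977148720185384, 619575073641047448602280044, 619575073641117817489063968, 619575073641469110774677616, 619575073641469110908895280, 619575073641469661067346016, 619575073641469661201563680,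 619575368572674636297281644, 619575368572674636297678856, 619575368644732230335471624, 619575368644732230368763944, 619575368644802324235026540, 619575368644802599070990444, 619575368644802599112933444, 619575368644837508565172332, 619575368645084074056089664, 619575368645259170737569904, 619575368645259445615476816, 619575368645259721030238304, 619575368645259995908145216, 619575368788882327938793512, 619575368788917512310882372, 619876714007401934677766150, 619876714007402003363688458, 619876714007402003397226508, 619876714151657310486155268, 619876714151657585355681794, 619876714151657860208422914, 619876714151657860241960964, 619876714151938510006153234, 619876714151939060298838018, 619876714152044063122407442, 619876714728117787911393316, 619876714728118062789562372, 619876714800210566313017380, 619877009155588588973748226, 619877009155588657156349960, 619877009155588657550618626, 619877009155588657693208584, 619877009155728776026812434, 619877009155729326319497218, 619877009155834329143066642, 619877009299843964782137344, 619877009299844514001084416, 619877009299844514537943040, 619877009299879148608970752, 619877009299914332981055488, 619877009876304717085544448, 619877009948397220105699360, 619877009948397220642553888, 619877009948397494950313984, 619877009948397495487168512, 619877304879673045686824964, 619877304879673114372747272, 619877304879673114406035464, 619877304879673114406162436, 619877305023787958884372516, 619877305023788233762541572, 619877305023928696364740608, 619877305023928971217481728, 619877305023928971250769920, 619877305023963880744943616,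 619877305024210171307896832, 619877305024315174131482640, 619877305024315174164774928, 619877305024315724424151040, 619877305024315724457443328, 619877305095880737285996580, 619877305095986290402398208, 619877599451399015727636552, 619877599451399015861985288, 619877599523526978501345352, 619877599595654872706719744, 619877599667782285724631040, 619877599667782354309759040, 619877599667782835480428544, 619877599667782904065556544, 619877600027578293590958152, 619877600027578293725306888, 619877600027859699982807040, 619877600027859768559677440, 619877600027859768702144512, 619877600027930137312100352, 619877600028000437328556032, 619877600028105440152141840, 619877600028105508871487504, 619877600028105990444810240, 619877600028106059164155904, 619877600099706256364666952, 619877600099917362597470208, 619877600171834150570041344, 619877600171974888058523648, 619877600243961838499397632, 619877600243961907084525632, 619877600243962113343750144, 619877600243962181928878144, 619877600244067391615533088, 619877600244067460200792096, 619877600244067666460147712, 619877600244067735045406720, 619877600244277947421179952, 619877600244277947521974288, 619877600244277947555512352, 619877600244278016107102288, 619877600244278016140640352, 619877600244278222265794576, 619877600244278222400126976, 619877600244278290985254976, 619877600244278497713848352, 619877600244278497814642688, 619877600244278566399770688, 619877600244278772558462976]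

def FM : Nat := 619877600244278841454260350
def BIG1 : Nat := 655979907092749340980299907533844049265773581184121433212702173470673409863759699087545515661454375370982015547982754320
def BIGS : Nat := 1243807117031857428062988233171147207900670357863993349311429110185757714509035218224774529015540812103299600
def BIG1I : Nat := 62616137721310168051847927819069406574794414108323476236560697583234055705875821317092423318874176620582370139423650320
def BIGSI : Nat := 1114829323982406110221866818464553453535944382383958597405653471682303706434872874923633897276981985322218000

def nbrB (j k : Nat) : Bool := ((nbrMask j >>> k) &&& 1) == 1

def bitIdx (x y : Nat) : Nat := if x ≤ y then x * 10 + y else y * 10 + x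

def contrib (xs : List Nat) (y : Nat) : Nat :=
  (xs.takeWhile (fun x => nbrB x y)).foldl (fun a x => a ||| (1 <<< bitIdx x y)) 0

def ys10 : List Nat := [0,1,2,3,4,5,6,7,8,9]

def cm (xs : List Nat) : Nat := ys10.foldl (fun a y => a ||| contrib xs y) 0

def pp (big i j : Nat) : Nat := (big >>> (40*i + 4*j)) &&& 15
def p1 (e t : Nat) : Nat := pp BIG1 e t
def pi1 (e t : Nat) : Nat := pp BIG1I e t
def ps (w t : Nat) : Nat := pp BIGS (w-1) t
def psi (w t : Nat) : Nat := pp BIGSI (w-1) t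
def q1 (e w t : Nat) : Nat := p1 e (ps w t)

def allPairs : List (Nat × Nat) :=
  [(0,1),(0,2),(0,3),(0,4),(0,5),(0,6),(0,7),(0,8),(0,9),(1,2),(1,3),(1,4),(1,5),(1,6),(1,7),(1,8),(1,9),
   (2,3),(2,4),(2,5),(2,6),(2,7),(2,8),(2,9),(3,4),(3,5),(3,6),(3,7),(3,8),(3,9),(4,5),(4,6),(4,7),(4,8),(4,9),
   (5,6),(5,7),(5,8),(5,9),(6,7),(6,8),(6,9),(7,8),(7,9),(8,9)]

def act (f : Nat → Nat) (m : Nat) : Nat :=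
  allPairs.foldl (fun a q =>
    a ||| (if m.testBit (bitIdx q.1 q.2) then 1 <<< bitIdx (f q.1) (f q.2) else 0)) 0

/-! ### The three heavy kernel computations -/

set_option maxRecDepth 1000000 in
theorem kmainK : ∀ x1 ∈ [(1 : Nat), 7], ∀ x2 ∈ ys10, x2 ≠ 0 ∧ x2 ≠ x1 →
    ∀ x3 ∈ ys10, x3 ≠ 0 ∧ x3 ≠ x1 ∧ x3 ≠ x2 →
    ∀ x4 ∈ ys10, x4 ≠ 0 ∧ x4 ≠ x1 ∧ x4 ≠ x2 ∧ x4 ≠ x3 →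
    ∀ x5 ∈ ys10, x5 ≠ 0 ∧ x5 ≠ x1 ∧ x5 ≠ x2 ∧ x5 ≠ x3 ∧ x5 ≠ x4 →
    ∃ m ∈ L72, cm [0, x1, x2, x3, x4, x5] ||| m = m := by decide +kernel

set_option maxRecDepth 1000000 in
theorem memK : ∀ e ∈ ys10, ∀ w ∈ ys10, w ≠ 0 → ∀ m ∈ L72, act (q1 e w) m ∈ LFIN := by decide +kernel

set_option maxRecDepth 1000000 in
theorem fkK : ∀ d1 ∈ LFIN, ∀ d2 ∈ LFIN, (d1 ||| d2) &&& FM ≠ FM := by decide +kernel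

/-! ### Small decidable facts -/

lemma mem_ys10 : ∀ n < 10, n ∈ ys10 := by decide

lemma nbr_irrefl : ∀ j : Fin 10, nbrB ↑j ↑j = false := by decide

def P1F (e t : Fin 10) : Fin 10 := ⟨p1 ↑e ↑t % 10, Nat.mod_lt _ (by norm_num)⟩
def Pi1F (e t : Fin 10) : Fin 10 := ⟨pi1 ↑e ↑t % 10, Nat.mod_lt _ (by norm_num)⟩
def PsF (w t : Fin 10) : Fin 10 := ⟨ps ↑w ↑t % 10, Nat.mod_lt _ (by norm_num)⟩
def PsiF (w t : Fin 10) : Fin 10 := ⟨psi ↑w ↑t % 10, Nat.mod_lt _ (by norm_num)⟩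
def repF (w : Fin 10) : Fin 10 := if (↑w : ℕ) ≤ 6 then 1 else 7

lemma P1F_zero : ∀ e : Fin 10, P1F e 0 = e := by decide
lemma P1F_Pi1F : ∀ e t : Fin 10, P1F e (Pi1F e t) = t := by decide
lemma nbr_P1F : ∀ e j k : Fin 10, nbrB ↑(P1F e j) ↑(P1F e k) = nbrB ↑j ↑k := by decide
lemma PsF_zero : ∀ w : Fin 10, w ≠ 0 → PsF w 0 = 0 := by decide
lemma PsF_PsiF : ∀ w t : Fin 10, w ≠ 0 → PsF w (PsiF w t) = t := by decide
lemma PsiF_PsF : ∀ w t : Fin 10, w ≠ 0 → PsiF w (PsF w t) = t := by decide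
lemma nbr_PsF : ∀ w j k : Fin 10, w ≠ 0 → nbrB ↑(PsF w j) ↑(PsF w k) = nbrB ↑j ↑k := by decide
lemma PsF_repF : ∀ w : Fin 10, w ≠ 0 → PsF w (repF w) = w := by decide
lemma repF_ne_zero : ∀ w : Fin 10, repF w ≠ 0 := by decide
lemma q1_comp : ∀ e w t : Fin 10, w ≠ 0 → q1 ↑e ↑w ↑t = ↑(P1F e (PsF w t)) := by decide

lemma nbr_card : ∀ k : Fin 10, (Finset.univ.filter fun x : Fin 10 => nbrB ↑x ↑k = true).card = 6 := by
  decide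

def wt : Fin 10 → ℕ := fun k => if k = 0 then 0 else if k = 1 then 1 else if k = 7 then 1 else 2

lemma wt_zero_lt : ∀ z : Fin 10, z ≠ 0 → 0 < wt z := by decide
lemma wt_le_one : ∀ z : Fin 10, z ≠ 0 → wt z ≤ 1 → z = 1 ∨ z = 7 := by decide
lemma wt_repF : ∀ w : Fin 10, wt (repF w) = 1 := by decide
lemma wt_zero : wt 0 = 0 := by decide

lemma decodeK : ∀ q < 100, FM.testBit q = true →
    ∃ j : Fin 10, ∃ k : Fin 10, nbrB ↑j ↑k = true ∧ bitIdx ↑j ↑k = q := by decide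

lemma FM_lt : FM < 2 ^ 100 := by norm_num [FM]

lemma minPairMem : ∀ x y : Fin 10, x ≠ y → ((min ↑x ↑y : ℕ), (max ↑x ↑y : ℕ)) ∈ allPairs := by decide

/-! ### bit/fold lemmas -/

lemma bitIdx_comm (x y : ℕ) : bitIdx x y = bitIdx y x := by
  unfold bitIdx
  by_cases h1 : x ≤ y <;> by_cases h2 : y ≤ x <;> simp [h1, h2] <;> omega

lemma testBit_foldl_or {α : Type*} (g : α → ℕ) (l : List α) (a : ℕ) (q : ℕ) :
    (l.foldl (fun acc x => acc ||| g x) a).testBit q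
      = (a.testBit q || l.any (fun x => (g x).testBit q)) := by
  induction l generalizing a with
  | nil => simp
  | cons x xs ih => simp [ih, Nat.testBit_or, Bool.or_assoc]

lemma testBit_shiftLeft_self (n : ℕ) : (1 <<< n).testBit n = true := by
  simp [Nat.shiftLeft_eq, Nat.testBit_two_pow_self]

lemma contrib_testBit {xs : List ℕ} {y j : ℕ} (h : j ∈ xs.takeWhile (fun x => nbrB x y)) :
    (contrib xs y).testBit (bitIdx j y) = true := by
  unfold contrib
  rw [testBit_foldl_or]
  refine Bool.or_eq_true_iff.mpr (Or.inr ?_)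
  exact List.any_eq_true.mpr ⟨j, h, testBit_shiftLeft_self _⟩

lemma cm_testBit {xs : List ℕ} {j : ℕ} {k : ℕ} (hk : k < 10)
    (h : j ∈ xs.takeWhile (fun x => nbrB x k)) :
    (cm xs).testBit (bitIdx j k) = true := by
  unfold cm
  rw [testBit_foldl_or]
  refine Bool.or_eq_true_iff.mpr (Or.inr ?_)
  exact List.any_eq_true.mpr ⟨k, mem_ys10 k hk, contrib_testBit h⟩

lemma act_testBit {f : ℕ → ℕ} {m : ℕ} {x y : Fin 10} (hxy : x ≠ y)
    (hb : m.testBit (bitIdx ↑x ↑y) = true) :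
    (act f m).testBit (bitIdx (f ↑x) (f ↑y)) = true := by
  unfold act
  rw [testBit_foldl_or]
  refine Bool.or_eq_true_iff.mpr (Or.inr ?_)
  refine List.any_eq_true.mpr ⟨((min ↑x ↑y : ℕ), (max ↑x ↑y : ℕ)), minPairMem x y hxy, ?_⟩
  have hbi : bitIdx (min (↑x : ℕ) ↑y) (max (↑x : ℕ) ↑y) = bitIdx ↑x ↑y := by
    rcases Nat.le_total (↑x : ℕ) ↑y with h | h
    · simp [Nat.min_eq_left h, Nat.max_eq_right h]
    · rw [Nat.min_eq_right h, Nat.max_eq_left h, bitIdx_comm]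
  have hbo : bitIdx (f (min (↑x : ℕ) ↑y)) (f (max (↑x : ℕ) ↑y)) = bitIdx (f ↑x) (f ↑y) := by
    rcases Nat.le_total (↑x : ℕ) ↑y with h | h
    · simp [Nat.min_eq_left h, Nat.max_eq_right h]
    · rw [Nat.min_eq_right h, Nat.max_eq_left h, bitIdx_comm]
  simp only [hbi, hb, if_true]
  rw [hbo]
  exact testBit_shiftLeft_self _

lemma get_mem_takeWhile {p : ℕ → Bool} :
    ∀ (l : List ℕ) (n : ℕ) (h : n < l.length),
      (∀ r (hr : r < l.length), r ≤ n → p (l.get ⟨r, hr⟩) = true) →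
        l.get ⟨n, h⟩ ∈ l.takeWhile p := by
  intro l
  induction l with
  | nil => intro n h; simp at h
  | cons a l ih =>
    intro n h hall
    have hpa : p a = true := hall 0 (by simp) (Nat.zero_le _)
    cases n with
    | zero => simp [List.takeWhile_cons, hpa]
    | succ n =>
      have h' : n < l.length := by simpa using h
      have hmem : l.get ⟨n, h'⟩ ∈ l.takeWhile p := by
        refine ih n h' ?_
        intro r hr hrn
        exact hall (r+1) (by simpa using hr) (by omega)
      simp only [List.takeWhile_cons, hpa, if_true]
      simp only [List.get_cons_succ]
      exact List.mem_cons_of_mem _ hmem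

/-! ### The graph side -/

open SimpleGraph

abbrev PG : SimpleGraph ((⊤ : SimpleGraph (Fin 5)).edgeSet) := ((⊤ : SimpleGraph (Fin 5)).lineGraph)ᶜ

def evS : Fin 10 → Sym2 (Fin 5) :=
  ![s(0,1), s(0,2), s(0,3), s(0,4), s(1,2), s(1,3), s(1,4), s(2,3), s(2,4), s(3,4)]

lemma evS_not_diag : ∀ n, ¬ (evS n).IsDiag := by decide

lemma evS_mem : ∀ n, evS n ∈ (⊤ : SimpleGraph (Fin 5)).edgeSet := by
  intro n
  rw [SimpleGraph.edgeSet_top]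
  exact evS_not_diag n

def EV (n : Fin 10) : ((⊤ : SimpleGraph (Fin 5)).edgeSet) := ⟨evS n, evS_mem n⟩

lemma evS_inj_dec : ∀ a b : Fin 10, evS a = evS b → a = b := by decide

lemma EV_inj : Function.Injective EV := by
  intro a b h
  exact evS_inj_dec a b (congrArg Subtype.val h)

lemma EV_surj_dec : ∀ a b : Fin 5, a ≠ b → ∃ n : Fin 10, evS n = s(a,b) := by decide

lemma EV_surj : ∀ v : ((⊤ : SimpleGraph (Fin 5)).edgeSet), ∃ n, EV n = v := by
  rintro ⟨e, he⟩
  revert he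
  induction e using Sym2.ind with
  | _ a b =>
    intro he
    rw [SimpleGraph.mem_edgeSet] at he
    have hab : a ≠ b := by simpa using he
    obtain ⟨n, hn⟩ := EV_surj_dec a b hab
    exact ⟨n, Subtype.ext hn⟩

lemma share_iff : ∀ j k : Fin 10,
    (j ≠ k ∧ ∃ v : Fin 5, v ∈ evS j ∧ v ∈ evS k) ↔ nbrB ↑j ↑k = true := by decide

lemma lineAdj_iff (j k : Fin 10) :
    ((⊤ : SimpleGraph (Fin 5)).lineGraph).Adj (EV j) (EV k) ↔ nbrB ↑j ↑k = true := by
  have h0 : ((⊤ : SimpleGraph (Fin 5)).lineGraph).Adj (EV j) (EV k) ↔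
      (EV j ≠ EV k ∧ ((EV j : Sym2 (Fin 5)) ∩ (EV k : Sym2 (Fin 5)) : Set (Fin 5)).Nonempty) :=
    Iff.rfl
  rw [h0, ← share_iff j k]
  constructor
  · rintro ⟨hne, v, hv⟩
    rw [Set.mem_inter_iff] at hv
    refine ⟨fun h => hne (congrArg EV h), v, ?_, ?_⟩
    · simpa [EV] using hv.1
    · simpa [EV] using hv.2
  · rintro ⟨hne, v, hv1, hv2⟩
    refine ⟨fun h => hne (EV_inj h), ⟨v, ?_⟩⟩
    rw [Set.mem_inter_iff]
    constructor
    · simpa [EV] using hv1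
    · simpa [EV] using hv2

lemma PG_adj_iff (j k : Fin 10) :
    PG.Adj (EV j) (EV k) ↔ (j ≠ k ∧ nbrB ↑j ↑k = false) := by
  rw [SimpleGraph.compl_adj, lineAdj_iff]
  constructor
  · rintro ⟨hne, hn⟩
    refine ⟨fun h => hne (congrArg EV h), ?_⟩
    cases hnb : nbrB ↑j ↑k
    · rfl
    · exact absurd hnb hn
  · rintro ⟨hjk, hnb⟩
    refine ⟨fun h => hjk (EV_inj h), ?_⟩
    rw [hnb]
    simp

/-! ### The per-coordinate argument -/

theorem coord (A B : Fin 10 → ℝ) (hab : ∀ j, A j ≤ B j)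
    (hsep : ∀ j k : Fin 10, B j < A k → nbrB ↑j ↑k = true) :
    ∃ d ∈ LFIN, ∀ j k : Fin 10, B j < A k → Nat.testBit d (bitIdx ↑j ↑k) = true := by
  classical
  obtain ⟨e0, -, he0min⟩ := Finset.exists_min_image Finset.univ B ⟨0, Finset.mem_univ 0⟩
  set A' : Fin 10 → ℝ := fun t => A (P1F e0 t) with hA'
  set B' : Fin 10 → ℝ := fun t => B (P1F e0 t) with hB'
  have hab' : ∀ j, A' j ≤ B' j := fun j => hab _
  have hsep' : ∀ j k : Fin 10, B' j < A' k → nbrB ↑j ↑k = true := by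
    intro j k h
    rw [← nbr_P1F e0 j k]
    exact hsep _ _ h
  have hmin' : ∀ t, B' 0 ≤ B' t := by
    intro t
    show B (P1F e0 0) ≤ B (P1F e0 t)
    rw [P1F_zero e0]
    exact he0min _ (Finset.mem_univ _)
  obtain ⟨w, hwmem, hwmin⟩ := Finset.exists_min_image (Finset.univ.erase (0 : Fin 10)) B'
    ⟨1, by simp⟩
  have hw0 : w ≠ 0 := (Finset.mem_erase.mp hwmem).1
  set A'' : Fin 10 → ℝ := fun t => A' (PsF w t) with hA''
  set B'' : Fin 10 → ℝ := fun t => B' (PsF w t) with hB''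
  have hab'' : ∀ j, A'' j ≤ B'' j := fun j => hab' _
  have hsep'' : ∀ j k : Fin 10, B'' j < A'' k → nbrB ↑j ↑k = true := by
    intro j k h
    rw [← nbr_PsF w j k hw0]
    exact hsep' _ _ h
  have hmin'' : ∀ t, B'' 0 ≤ B'' t := by
    intro t
    show B' (PsF w 0) ≤ B' (PsF w t)
    rw [PsF_zero w hw0]
    exact hmin' _
  have hsecond : ∀ t : Fin 10, t ≠ 0 → B'' (repF w) ≤ B'' t := by
    intro t ht
    show B' (PsF w (repF w)) ≤ B' (PsF w t)
    rw [PsF_repF w hw0]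
    refine hwmin _ (Finset.mem_erase.mpr ⟨?_, Finset.mem_univ _⟩)
    intro h0
    apply ht
    have h1 : t = PsiF w (PsF w t) := (PsiF_PsF w t hw0).symm
    rw [h0, ← PsF_zero w hw0, PsiF_PsF w 0 hw0] at h1
    exact h1
  set key : Fin 10 → ℝ ×ₗ ℕ := fun k => toLex (B'' k, wt k) with hkey
  set σ : Equiv.Perm (Fin 10) := Tuple.sort key with hσdef
  have mono : Monotone (key ∘ σ) := Tuple.monotone_sort key
  have hposlt : ∀ {u v : Fin 10}, key u < key v → σ.symm u < σ.symm v := by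
    intro u v huv
    by_contra hle
    push_neg at hle
    have h2 := mono hle
    simp only [Function.comp_apply, Equiv.apply_symm_apply] at h2
    exact absurd (lt_of_lt_of_le huv h2) (lt_irrefl _)
  have hkey0 : ∀ t : Fin 10, t ≠ 0 → key 0 < key t := by
    intro t ht
    refine Prod.Lex.lt_iff.mpr ?_
    rcases lt_or_eq_of_le (hmin'' t) with h | h
    · exact Or.inl h
    · exact Or.inr ⟨h, by show wt 0 < wt t; rw [wt_zero]; exact wt_zero_lt t ht⟩
  have hσ0 : σ 0 = 0 := by
    by_contra hne
    have h1 : key 0 < key (σ 0) := hkey0 _ hne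
    have h2 : (0 : Fin 10) ≤ σ.symm 0 := Fin.zero_le _
    have h3 := mono h2
    simp only [Function.comp_apply, Equiv.apply_symm_apply] at h3
    exact absurd (lt_of_lt_of_le h1 h3) (lt_irrefl _)
  have hz17 : σ 1 = 1 ∨ σ 1 = 7 := by
    have hz0 : σ 1 ≠ 0 := by
      intro h
      rw [← hσ0] at h
      exact absurd (σ.injective h) (by decide)
    have hr0 : σ.symm (repF w) ≠ 0 := by
      intro h
      have h2 : σ (σ.symm (repF w)) = σ 0 := by rw [h]
      rw [Equiv.apply_symm_apply, hσ0] at h2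
      exact repF_ne_zero w h2
    have h1le : (1 : Fin 10) ≤ σ.symm (repF w) := by
      rw [Fin.le_def]
      have := Fin.pos_of_ne_zero hr0
      rw [Fin.lt_def] at this
      exact Nat.succ_le_of_lt this
    have hkk : key (σ 1) ≤ key (repF w) := by
      have h2 := mono h1le
      simp only [Function.comp_apply, Equiv.apply_symm_apply] at h2
      exact h2
    have hBl : B'' (repF w) ≤ B'' (σ 1) := hsecond _ hz0
    rcases Prod.Lex.le_iff.mp hkk with h | ⟨h1, h2⟩
    · exact absurd hBl (not_le.mpr h)
    · refine wt_le_one _ hz0 ?_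
      calc wt (σ 1) ≤ wt (repF w) := h2
      _ = 1 := wt_repF w
  set xs : List ℕ := [(0 : ℕ), ↑(σ 1), ↑(σ 2), ↑(σ 3), ↑(σ 4), ↑(σ 5)] with hxs
  have hxslen : xs.length = 6 := by rw [hxs]; rfl
  have hxsget : ∀ (r : ℕ) (hr : r ≤ 5) (h6 : r < xs.length),
      xs.get ⟨r, h6⟩ = ↑(σ ⟨r, by omega⟩) := by
    intro r hr h6
    interval_cases r
    · show (0 : ℕ) = ↑(σ ⟨0, by omega⟩)
      have h1 : σ ⟨0, by omega⟩ = 0 := hσ0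
      rw [h1]
      rfl
    · rfl
    · rfl
    · rfl
    · rfl
    · rfl
  have hdist : ∀ i j : Fin 10, i ≠ j → (↑(σ i) : ℕ) ≠ ↑(σ j) := by
    intro i j hij h
    exact hij (σ.injective (Fin.val_injective h))
  have hne0 : ∀ i : Fin 10, i ≠ 0 → (↑(σ i) : ℕ) ≠ 0 := by
    intro i hi h
    have h2 : σ i = σ 0 := by
      apply Fin.val_injective
      rw [h, hσ0]
      rfl
    exact hi (σ.injective h2)
  have hx1mem : (↑(σ 1) : ℕ) ∈ [(1 : ℕ), 7] := by
    rcases hz17 with h | h <;> rw [h] <;> decide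
  obtain ⟨m, hmL72, hmsub⟩ :=
    kmainK ↑(σ 1) hx1mem
      ↑(σ 2) (mem_ys10 _ (σ 2).isLt) ⟨hne0 2 (by decide), hdist 2 1 (by decide)⟩
      ↑(σ 3) (mem_ys10 _ (σ 3).isLt)
        ⟨hne0 3 (by decide), hdist 3 1 (by decide), hdist 3 2 (by decide)⟩
      ↑(σ 4) (mem_ys10 _ (σ 4).isLt)
        ⟨hne0 4 (by decide), hdist 4 1 (by decide), hdist 4 2 (by decide), hdist 4 3 (by decide)⟩
      ↑(σ 5) (mem_ys10 _ (σ 5).isLt)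
        ⟨hne0 5 (by decide), hdist 5 1 (by decide), hdist 5 2 (by decide), hdist 5 3 (by decide),
          hdist 5 4 (by decide)⟩
  have hbits : ∀ j k : Fin 10, B'' j < A'' k → m.testBit (bitIdx ↑j ↑k) = true := by
    intro j k hjk
    have hjku : B'' j < B'' k := lt_of_lt_of_le hjk (hab'' k)
    have hkeyjk : key j < key k := Prod.Lex.lt_iff.mpr (Or.inl hjku)
    have hgood : ∀ r : Fin 10, r ≤ σ.symm j → nbrB ↑(σ r) ↑k = true := by
      intro r hrle
      have h1 : key (σ r) ≤ key j := by
        have h2 := mono hrle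
        simp only [Function.comp_apply, Equiv.apply_symm_apply] at h2
        exact h2
      have h2 : B'' (σ r) ≤ B'' j := by
        rcases Prod.Lex.le_iff.mp h1 with h | ⟨h, -⟩
        · exact le_of_lt h
        · exact le_of_eq h
      exact hsep'' _ _ (lt_of_le_of_lt h2 hjk)
    have hpj5 : (↑(σ.symm j) : ℕ) ≤ 5 := by
      by_contra hgt
      push_neg at hgt
      have hcard : Fintype.card {x : Fin 10 // nbrB ↑x ↑k = true} = 6 := by
        rw [Fintype.card_subtype]
        exact nbr_card k
      have hinj : Function.Injective (fun s : Fin ((↑(σ.symm j) : ℕ) + 1) =>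
          (⟨σ ⟨↑s, by omega⟩, hgood ⟨↑s, by omega⟩ (by
            rw [Fin.le_def]
            exact Nat.lt_succ_iff.mp s.isLt)⟩ : {x : Fin 10 // nbrB ↑x ↑k = true})) := by
        intro s t hst
        have h1 := Subtype.ext_iff.mp hst
        simp only at h1
        have h2 := σ.injective h1
        have h3 : (↑s : ℕ) = ↑t := by simpa using congrArg Fin.val h2
        exact Fin.val_injective h3
      have h3 := Fintype.card_le_of_injective _ hinj
      rw [hcard, Fintype.card_fin] at h3
      omega
    have hlen : (↑(σ.symm j) : ℕ) < xs.length := by omega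
    have hjmem : (↑j : ℕ) ∈ xs.takeWhile (fun x => nbrB x ↑k) := by
      have hgetj : xs.get ⟨↑(σ.symm j), hlen⟩ = ↑j := by
        rw [hxsget _ hpj5 hlen]
        congr 1
        have h4 : (⟨↑(σ.symm j), by omega⟩ : Fin 10) = σ.symm j := Fin.eta _ _
        rw [h4, Equiv.apply_symm_apply]
      rw [← hgetj]
      refine get_mem_takeWhile xs _ hlen ?_
      intro r hr hrle
      have hr5 : r ≤ 5 := by omega
      rw [hxsget r hr5 hr]
      refine hgood ⟨r, by omega⟩ ?_
      rw [Fin.le_def]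
      exact hrle
    have hcm : (cm xs).testBit (bitIdx ↑j ↑k) = true := cm_testBit k.isLt hjmem
    rw [← hmsub, Nat.testBit_or, hcm]
    simp
  refine ⟨act (q1 ↑e0 ↑w) m, memK ↑e0 (mem_ys10 _ e0.isLt) ↑w (mem_ys10 _ w.isLt)
    (fun h => hw0 (Fin.val_injective h)) m hmL72, ?_⟩
  intro j k hjk
  have hcomp : ∀ t : Fin 10, P1F e0 (PsF w (PsiF w (Pi1F e0 t))) = t := by
    intro t
    rw [PsF_PsiF w _ hw0, P1F_Pi1F]
  have hB''j' : B'' (PsiF w (Pi1F e0 j)) = B j := by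
    show B (P1F e0 (PsF w (PsiF w (Pi1F e0 j)))) = B j
    rw [hcomp j]
  have hA''k' : A'' (PsiF w (Pi1F e0 k)) = A k := by
    show A (P1F e0 (PsF w (PsiF w (Pi1F e0 k)))) = A k
    rw [hcomp k]
  have hjk' : B'' (PsiF w (Pi1F e0 j)) < A'' (PsiF w (Pi1F e0 k)) := by
    rw [hB''j', hA''k']
    exact hjk
  have hneq : PsiF w (Pi1F e0 j) ≠ PsiF w (Pi1F e0 k) := by
    intro h
    have h2 : j = k := by
      have := congrArg (fun t => P1F e0 (PsF w t)) h
      simpa [hcomp j, hcomp k] using this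
    rw [h2] at hjk
    exact absurd hjk (not_lt.mpr (hab k))
  have hbit := hbits _ _ hjk'
  have hact := act_testBit (f := q1 ↑e0 ↑w) hneq hbit
  have hq1j : q1 ↑e0 ↑w ↑(PsiF w (Pi1F e0 j)) = (↑j : ℕ) := by
    rw [q1_comp e0 w _ hw0, hcomp j]
  have hq1k : q1 ↑e0 ↑w ↑(PsiF w (Pi1F e0 k)) = (↑k : ℕ) := by
    rw [q1_comp e0 w _ hw0, hcomp k]
  rwa [hq1j, hq1k] at hact

/-! ### No 2-dimensional box representation -/

theorem no2 : ¬ ∃ I : ((⊤ : SimpleGraph (Fin 5)).edgeSet) → Fin 2 → Set ℝ, PG.IsBoxRep 2 I := by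
  rintro ⟨I, hIv, hAdj⟩
  choose a b hab hIcc using hIv
  have hsepAll : ∀ (i : Fin 2) (j k : Fin 10), b (EV j) i < a (EV k) i → nbrB ↑j ↑k = true := by
    intro i j k h
    have hjk : j ≠ k := by
      intro hh
      rw [hh] at h
      exact absurd h (not_lt.mpr (hab _ _))
    have hnadj : ¬ PG.Adj (EV j) (EV k) := by
      intro hadj
      have hne : EV j ≠ EV k := fun hh => hjk (EV_inj hh)
      obtain ⟨x, hx1, hx2⟩ := (hAdj _ _ hne).mp hadj i
      rw [hIcc, Set.mem_Icc] at hx1 hx2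
      exact absurd (lt_of_lt_of_le h (le_trans hx2.1 hx1.2)) (lt_irrefl _)
    rw [PG_adj_iff] at hnadj
    push_neg at hnadj
    have h2 := hnadj hjk
    cases hnb : nbrB ↑j ↑k
    · exact absurd hnb h2
    · rfl
  obtain ⟨d0, hd0, hbits0⟩ := coord (fun j => a (EV j) 0) (fun j => b (EV j) 0)
    (fun j => hab _ _) (hsepAll 0)
  obtain ⟨d1, hd1, hbits1⟩ := coord (fun j => a (EV j) 1) (fun j => b (EV j) 1)
    (fun j => hab _ _) (hsepAll 1)
  have hcover : ∀ j k : Fin 10, nbrB ↑j ↑k = true →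
      (d0 ||| d1).testBit (bitIdx ↑j ↑k) = true := by
    intro j k hnb
    have hjk : j ≠ k := by
      intro hh
      rw [hh, nbr_irrefl k] at hnb
      exact Bool.false_ne_true hnb
    have hne : EV j ≠ EV k := fun hh => hjk (EV_inj hh)
    have hnadj : ¬ PG.Adj (EV j) (EV k) := by
      rw [PG_adj_iff]
      rintro ⟨-, hf⟩
      rw [hnb] at hf
      exact absurd hf (by simp)
    have hnot : ¬ ∀ i : Fin 2, ((I (EV j) i ∩ I (EV k) i).Nonempty) := by
      intro hall
      exact hnadj ((hAdj _ _ hne).mpr hall)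
    push_neg at hnot
    obtain ⟨i, hiempty⟩ := hnot
    have hsep2 : b (EV j) i < a (EV k) i ∨ b (EV k) i < a (EV j) i := by
      by_contra hcon
      push_neg at hcon
      have hxmem : max (a (EV j) i) (a (EV k) i) ∈ I (EV j) i ∩ I (EV k) i := by
        rw [Set.mem_inter_iff]
        constructor
        · rw [hIcc, Set.mem_Icc]
          exact ⟨le_max_left _ _, max_le (hab _ _) hcon.1⟩
        · rw [hIcc, Set.mem_Icc]
          exact ⟨le_max_right _ _, max_le hcon.2 (hab _ _)⟩
      rw [hiempty] at hxmem
      exact absurd hxmem (Set.notMem_empty _)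
    rw [Nat.testBit_or]
    have hbit : d0.testBit (bitIdx ↑j ↑k) = true ∨ d1.testBit (bitIdx ↑j ↑k) = true := by
      rcases hsep2 with h | h
      · fin_cases i
        · exact Or.inl (hbits0 j k h)
        · exact Or.inr (hbits1 j k h)
      · fin_cases i
        · refine Or.inl ?_
          rw [bitIdx_comm]
          exact hbits0 k j h
        · refine Or.inr ?_
          rw [bitIdx_comm]
          exact hbits1 k j h
    rcases hbit with h | h <;> simp [h]
  have hFMeq : (d0 ||| d1) &&& FM = FM := by
    apply Nat.eq_of_testBit_eq
    intro q
    rw [Nat.testBit_and]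
    cases hq : FM.testBit q
    · simp
    · simp only [Bool.and_true]
      have hq100 : q < 100 := by
        by_contra hge
        push_neg at hge
        have hlt : FM < 2 ^ q := lt_of_lt_of_le FM_lt (Nat.pow_le_pow_right (by norm_num) hge)
        rw [Nat.testBit_lt_two_pow hlt] at hq
        exact Bool.false_ne_true hq
      obtain ⟨j, k, hnb, hbi⟩ := decodeK q hq100 hq
      rw [← hbi]
      exact hcover j k hnb
  exact fkK d0 hd0 d1 hd1 hFMeq

/-! ### Existence of a box representation in dimension 100 -/

def qof (c : Fin 100) : Fin 10 := ⟨(↑c : ℕ) / 10, by have := c.isLt; omega⟩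
def rof (c : Fin 100) : Fin 10 := ⟨(↑c : ℕ) % 10, Nat.mod_lt _ (by norm_num)⟩

open Classical in
noncomputable def IE : ((⊤ : SimpleGraph (Fin 5)).edgeSet) → Fin 100 → Set ℝ := fun v c =>
  if v = EV (qof c) ∧ nbrB ↑(qof c) ↑(rof c) = true then Set.Icc 0 0
  else if v = EV (rof c) ∧ nbrB ↑(qof c) ↑(rof c) = true then
    Set.Icc 1 1
  else Set.Icc 0 1

lemma IE_cases (v : ((⊤ : SimpleGraph (Fin 5)).edgeSet)) (c : Fin 100) :
    IE v c = Set.Icc 0 0 ∨ IE v c = Set.Icc 1 1 ∨ IE v c = Set.Icc 0 1 := by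
  unfold IE
  split
  · exact Or.inl rfl
  · split
    · exact Or.inr (Or.inl rfl)
    · exact Or.inr (Or.inr rfl)

theorem ex100 : PG.IsBoxRep 100 IE := by
  constructor
  · intro v c
    rcases IE_cases v c with h | h | h
    · exact ⟨0, 0, le_refl _, h⟩
    · exact ⟨1, 1, le_refl _, h⟩
    · exact ⟨0, 1, by norm_num, h⟩
  · intro u v huv
    constructor
    · intro hadj c
      by_cases h1u : u = EV (qof c) ∧
          nbrB ↑(qof c) ↑(rof c) = true
      · by_cases h2v : v = EV (rof c) ∧
            nbrB ↑(qof c) ↑(rof c) = true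
        · exfalso
          have hadj2 : PG.Adj (EV (qof c)) (EV (rof c)) := by
            rw [← h1u.1, ← h2v.1]
            exact hadj
          have := ((PG_adj_iff _ _).mp hadj2).2
          rw [h1u.2] at this
          exact absurd this (by simp)
        · have h1v : ¬ (v = EV (qof c) ∧
              nbrB ↑(qof c) ↑(rof c) = true) := by
            rintro ⟨hv, -⟩
            exact huv (h1u.1.trans hv.symm)
          refine ⟨0, ?_, ?_⟩
          · unfold IE
            rw [if_pos h1u]
            simp
          · unfold IE
            rw [if_neg h1v, if_neg h2v]
            simp
      · by_cases h2u : u = EV (rof c) ∧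
            nbrB ↑(qof c) ↑(rof c) = true
        · by_cases h1v : v = EV (qof c) ∧
              nbrB ↑(qof c) ↑(rof c) = true
          · exfalso
            have hadj2 : PG.Adj (EV (qof c))
                (EV (rof c)) := by
              rw [← h1v.1, ← h2u.1]
              exact hadj.symm
            have := ((PG_adj_iff _ _).mp hadj2).2
            rw [h2u.2] at this
            exact absurd this (by simp)
          · have h2v : ¬ (v = EV (rof c) ∧
                nbrB ↑(qof c) ↑(rof c) = true) := by
              rintro ⟨hv, -⟩
              exact huv (h2u.1.trans hv.symm)
            refine ⟨1, ?_, ?_⟩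
            · unfold IE
              rw [if_neg h1u, if_pos h2u]
              simp
            · unfold IE
              rw [if_neg h1v, if_neg h2v]
              simp
        · -- u gets [0,1]
          rcases IE_cases v c with h | h | h
          · refine ⟨0, ?_, ?_⟩
            · unfold IE
              rw [if_neg h1u, if_neg h2u]
              simp
            · rw [h]; simp
          · refine ⟨1, ?_, ?_⟩
            · unfold IE
              rw [if_neg h1u, if_neg h2u]
              simp
            · rw [h]; simp
          · refine ⟨0, ?_, ?_⟩
            · unfold IE
              rw [if_neg h1u, if_neg h2u]
              simp
            · rw [h]; simp
    · intro hall
      by_contra hnadj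
      obtain ⟨j, hj⟩ := EV_surj u
      obtain ⟨k, hk⟩ := EV_surj v
      have hjk : j ≠ k := by
        intro hh
        apply huv
        rw [← hj, ← hk, hh]
      have hnb : nbrB ↑j ↑k = true := by
        rw [← hj, ← hk] at hnadj
        rw [PG_adj_iff] at hnadj
        push_neg at hnadj
        have h2 := hnadj hjk
        cases hnbx : nbrB ↑j ↑k
        · exact absurd hnbx h2
        · rfl
      have hc100 : (↑j : ℕ) * 10 + ↑k < 100 := by
        have := j.isLt
        have := k.isLt
        omega
      set c : Fin 100 := ⟨(↑j : ℕ) * 10 + ↑k, hc100⟩ with hc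
      have hqj : qof c = j := by
        apply Fin.val_injective
        show ((↑j : ℕ) * 10 + ↑k) / 10 = ↑j
        have := k.isLt
        omega
      have hrk : rof c = k := by
        apply Fin.val_injective
        show ((↑j : ℕ) * 10 + ↑k) % 10 = ↑k
        have := k.isLt
        omega
      have hnbc : nbrB ↑(qof c) ↑(rof c) = true := by
        rw [hqj, hrk]
        exact hnb
      have hIu : IE u c = Set.Icc 0 0 := by
        unfold IE
        rw [if_pos ⟨by rw [hqj, hj], hnbc⟩]
      have hIv : IE v c = Set.Icc 1 1 := by
        have h1v : ¬ (v = EV (qof c) ∧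
            nbrB ↑(qof c) ↑(rof c) = true) := by
          rintro ⟨hv, -⟩
          apply huv
          rw [hv, hqj, hj]
        unfold IE
        rw [if_neg h1v, if_pos ⟨by rw [hrk, hk], hnbc⟩]
      obtain ⟨x, hx1, hx2⟩ := hall c
      rw [hIu, Set.mem_Icc] at hx1
      rw [hIv, Set.mem_Icc] at hx2
      have : (0 : ℝ) < 1 := by norm_num
      have hxx : x ≤ 0 := hx1.2
      have hxy : (1:ℝ) ≤ x := hx2.1
      linarith

/-! ### padding -/

theorem pad {V : Type*} (G : SimpleGraph V) {d : ℕ} (I : V → Fin d → Set ℝ)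
    (h : G.IsBoxRep d I) (hd : d ≤ 2) : ∃ I' : V → Fin 2 → Set ℝ, G.IsBoxRep 2 I' := by
  classical
  refine ⟨fun v i => if h' : (↑i : ℕ) < d then I v ⟨↑i, h'⟩ else Set.Icc 0 1, ?_, ?_⟩
  · intro v i
    by_cases h' : (↑i : ℕ) < d
    · simpa [h'] using h.1 v ⟨↑i, h'⟩
    · refine ⟨0, 1, by norm_num, ?_⟩
      simp [h']
  · intro u v huv
    rw [h.2 u v huv]
    constructor
    · intro hall i
      by_cases h' : (↑i : ℕ) < d
      · simpa [h'] using hall ⟨↑i, h'⟩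
      · refine ⟨0, ?_⟩
        simp only [dif_neg h']
        constructor <;> · rw [Set.mem_Icc]; norm_num
    · intro hall i
      have hi2 : (↑i : ℕ) < 2 := lt_of_lt_of_le i.isLt hd
      have h3 := hall ⟨↑i, hi2⟩
      have h' : ((⟨↑i, hi2⟩ : Fin 2) : ℕ) < d := i.isLt
      simpa [dif_pos h', Fin.eta] using h3

end BoxPf

/-- The boxicity of the complement of `L(K_5)` (the Petersen graph) is at least `3`. -/
theorem boxicity_compl_lineGraph_complete_five :
    3 ≤ ((⊤ : SimpleGraph (Fin 5)).lineGraph)ᶜ.boxicity := by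
  by_contra hlt
  push_neg at hlt
  have hnonempty : ({d : ℕ | ∃ I, BoxPf.PG.IsBoxRep d I}).Nonempty :=
    ⟨100, ⟨BoxPf.IE, BoxPf.ex100⟩⟩
  have hmem : sInf {d : ℕ | ∃ I, BoxPf.PG.IsBoxRep d I}
      ∈ {d : ℕ | ∃ I, BoxPf.PG.IsBoxRep d I} := Nat.sInf_mem hnonempty
  obtain ⟨I0, hI0⟩ := hmem
  have heq : ((⊤ : SimpleGraph (Fin 5)).lineGraph)ᶜ.boxicity
      = sInf {d : ℕ | ∃ I, BoxPf.PG.IsBoxRep d I} := rfl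
  have hd2 : sInf {d : ℕ | ∃ I, BoxPf.PG.IsBoxRep d I} ≤ 2 := by omega
  obtain ⟨I', hI'⟩ := BoxPf.pad BoxPf.PG I0 hI0 hd2
  exact BoxPf.no2 ⟨I', hI'⟩
end

section
/- Let G be a finite simple graph and let H be a spanning subgraph of the complement of the line graph L(G) having k edges. Then there exists an interval-order subgraph of the complement of L(G) whose edge set contains at least k/3 edges of H. -/
open Finset


lemma count_sep_perms {V : Type*} [Fintype V] [DecidableEq V]
    (w : V → ℝ) (hw : Function.Injective w) (a b c d : V)
    (hab : a ≠ b) (hac : a ≠ c) (had : a ≠ d) (hbc : b ≠ c) (hbd : b ≠ d) (hcd : c ≠ d) :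
    Fintype.card (Equiv.Perm V) =
      3 * (Finset.univ.filter (fun σ : Equiv.Perm V =>
        max (w (σ a)) (w (σ b)) < min (w (σ c)) (w (σ d)) ∨
        max (w (σ c)) (w (σ d)) < min (w (σ a)) (w (σ b)))).card := by
  classical
  set u : Fin 4 → V := ![a, b, c, d] with hu_def
  have hu : Function.Injective u := by
    intro i j hij
    rw [hu_def] at hij
    fin_cases i <;> fin_cases j <;> simp_all
  set y : Equiv.Perm V → Fin 4 → ℝ := fun σ i => w (σ (u i)) with hy_def
  have hy_inj : ∀ σ, Function.Injective (y σ) := fun σ => hw.comp (σ.injective.comp hu)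
  have hcard_lt : ∀ (σ : Equiv.Perm V) (i : Fin 4),
      (univ.filter fun j => y σ j < y σ i).card < 4 := by
    intro σ i
    have hsub : (univ.filter fun j => y σ j < y σ i) ⊆ univ.erase i := by
      intro j hj
      simp only [mem_filter] at hj
      exact mem_erase.2 ⟨fun h => absurd (h ▸ hj.2) (lt_irrefl _), mem_univ _⟩
    calc (univ.filter fun j => y σ j < y σ i).card ≤ (univ.erase i).card :=
          card_le_card hsub
      _ < univ.card := card_erase_lt_of_mem (mem_univ i)
      _ = 4 := by simp
  set rk : Equiv.Perm V → Fin 4 → Fin 4 :=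
    fun σ i => ⟨(univ.filter fun j => y σ j < y σ i).card, hcard_lt σ i⟩ with hrk_def
  have hrk_lt : ∀ σ i j, y σ i < y σ j → rk σ i < rk σ j := by
    intro σ i j hij
    have hsub : (univ.filter fun k => y σ k < y σ i) ⊆ (univ.filter fun k => y σ k < y σ j) := by
      intro k hk
      simp only [mem_filter] at hk ⊢
      exact ⟨hk.1, hk.2.trans hij⟩
    have hss : (univ.filter fun k => y σ k < y σ i) ⊂ (univ.filter fun k => y σ k < y σ j) := by
      rw [Finset.ssubset_iff_of_subset hsub]
      exact ⟨i, by simp [hij], by simp⟩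
    exact Finset.card_lt_card hss
  have hrk_iff : ∀ σ i j, rk σ i < rk σ j ↔ y σ i < y σ j := by
    intro σ i j
    constructor
    · intro h
      rcases lt_trichotomy (y σ i) (y σ j) with h' | h' | h'
      · exact h'
      · exact absurd (hy_inj σ h' ▸ h) (lt_irrefl _)
      · exact absurd (hrk_lt σ j i h') (asymm h)
    · exact hrk_lt σ i j
  have hrk_inj : ∀ σ, Function.Injective (rk σ) := by
    intro σ i j h
    by_contra hne
    rcases lt_trichotomy (y σ i) (y σ j) with h' | h' | h'
    · exact absurd (h ▸ hrk_lt σ i j h') (lt_irrefl _)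
    · exact hne (hy_inj σ h')
    · exact absurd (h ▸ hrk_lt σ j i h') (lt_irrefl _)
  set F : Equiv.Perm V → Equiv.Perm (Fin 4) := fun σ =>
    Equiv.ofBijective (rk σ) (Finite.injective_iff_bijective.mp (hrk_inj σ)) with hF_def
  have hF_apply : ∀ σ i, F σ i = rk σ i := fun _ _ => rfl
  set Scond : Equiv.Perm (Fin 4) → Prop := fun ρ =>
    (ρ 0 < ρ 2 ∧ ρ 0 < ρ 3 ∧ ρ 1 < ρ 2 ∧ ρ 1 < ρ 3) ∨
    (ρ 2 < ρ 0 ∧ ρ 2 < ρ 1 ∧ ρ 3 < ρ 0 ∧ ρ 3 < ρ 1) with hScond_def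
  have hsep_iff : ∀ σ : Equiv.Perm V,
      (max (w (σ a)) (w (σ b)) < min (w (σ c)) (w (σ d)) ∨
        max (w (σ c)) (w (σ d)) < min (w (σ a)) (w (σ b))) ↔ Scond (F σ) := by
    intro σ
    have h0 : w (σ a) = y σ 0 := by simp [hy_def, hu_def]
    have h1 : w (σ b) = y σ 1 := by simp [hy_def, hu_def]
    have h2 : w (σ c) = y σ 2 := by simp [hy_def, hu_def]
    have h3 : w (σ d) = y σ 3 := by simp [hy_def, hu_def]
    rw [h0, h1, h2, h3]
    simp only [hScond_def, hF_apply, max_lt_iff, lt_min_iff, hrk_iff]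
    tauto
  -- extension of permutations of Fin 4 to V
  set T : Equiv.Perm (Fin 4) →* Equiv.Perm V :=
    Equiv.Perm.viaEmbeddingHom ⟨u, hu⟩ with hT_def
  have hT_apply : ∀ (τ : Equiv.Perm (Fin 4)) (i : Fin 4), T τ (u i) = u (τ i) := by
    intro τ i
    exact Equiv.Perm.viaEmbedding_apply τ ⟨u, hu⟩ i
  have hF_mul : ∀ (σ : Equiv.Perm V) (τ : Equiv.Perm (Fin 4)), F (σ * T τ) = F σ * τ := by
    intro σ τ
    apply Equiv.ext
    intro i
    have hy' : ∀ j, y (σ * T τ) j = y σ (τ j) := by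
      intro j
      simp only [hy_def, Equiv.Perm.mul_apply, hT_apply]
    show rk (σ * T τ) i = rk σ (τ i)
    apply Fin.ext
    show (univ.filter fun j => y (σ * T τ) j < y (σ * T τ) i).card
        = (univ.filter fun j => y σ j < y σ (τ i)).card
    simp only [hy']
    apply Finset.card_bij (fun j _ => τ j)
    · intro j hj
      simp only [mem_filter] at hj ⊢
      exact ⟨mem_univ _, hj.2⟩
    · intro j₁ _ j₂ _ h
      exact τ.injective h
    · intro j hj
      simp only [mem_filter] at hj
      exact ⟨τ⁻¹ j, by simp [hj.2], by simp⟩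
  have hfiber : ∀ ρ : Equiv.Perm (Fin 4),
      (univ.filter fun σ => F σ = ρ).card = (univ.filter fun σ => F σ = 1).card := by
    intro ρ
    apply Finset.card_bij' (fun σ _ => σ * T ρ⁻¹) (fun σ _ => σ * T ρ)
    · intro σ hσ
      simp only [mem_filter] at hσ ⊢
      refine ⟨mem_univ _, ?_⟩
      rw [hF_mul, hσ.2, mul_inv_cancel]
    · intro σ hσ
      simp only [mem_filter] at hσ ⊢
      refine ⟨mem_univ _, ?_⟩
      rw [hF_mul, hσ.2, one_mul]
    · intro σ _
      rw [mul_assoc, ← map_mul, inv_mul_cancel, map_one, mul_one]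
    · intro σ _
      rw [mul_assoc, ← map_mul, mul_inv_cancel, map_one, mul_one]
  set cnt := (univ.filter fun σ : Equiv.Perm V => F σ = 1).card with hcnt_def
  have htotal : Fintype.card (Equiv.Perm V) = 24 * cnt := by
    rw [← Finset.card_univ]
    rw [Finset.card_eq_sum_card_fiberwise (f := F) (t := univ) (fun σ _ => mem_univ (F σ))]
    rw [Finset.sum_congr rfl (fun ρ _ => hfiber ρ)]
    rw [Finset.sum_const, Finset.card_univ, smul_eq_mul]
    congr 1
  have hsep_card : (univ.filter (fun σ : Equiv.Perm V =>
      max (w (σ a)) (w (σ b)) < min (w (σ c)) (w (σ d)) ∨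
      max (w (σ c)) (w (σ d)) < min (w (σ a)) (w (σ b)))).card = 8 * cnt := by
    have heq : (univ.filter (fun σ : Equiv.Perm V =>
        max (w (σ a)) (w (σ b)) < min (w (σ c)) (w (σ d)) ∨
        max (w (σ c)) (w (σ d)) < min (w (σ a)) (w (σ b))))
        = univ.filter (fun σ => Scond (F σ)) := by
      apply Finset.filter_congr
      intro σ _
      exact hsep_iff σ
    rw [heq]
    rw [Finset.card_eq_sum_card_fiberwise (f := F) (t := univ.filter Scond)
      (fun σ hσ => by
        simp only [Finset.mem_coe, mem_filter] at hσ ⊢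
        exact ⟨mem_univ _, hσ.2⟩)]
    have hfib2 : ∀ ρ ∈ univ.filter Scond,
        ((univ.filter fun σ => Scond (F σ)).filter fun σ => F σ = ρ).card = cnt := by
      intro ρ hρ
      simp only [mem_filter] at hρ
      rw [Finset.filter_filter]
      have : (univ.filter fun σ => Scond (F σ) ∧ F σ = ρ) = univ.filter fun σ => F σ = ρ := by
        apply Finset.filter_congr
        intro σ _
        constructor
        · exact fun h => h.2
        · intro h; exact ⟨h ▸ hρ.2, h⟩
      rw [this, hfiber ρ]
    rw [Finset.sum_congr rfl hfib2, Finset.sum_const, smul_eq_mul]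
    congr 1
  rw [htotal, hsep_card]
  ring

/-- lower endpoint of the interval of an edge -/
noncomputable def sepLo {V : Type*} (g : V → ℝ) (s : Sym2 V) : ℝ :=
  Sym2.lift ⟨fun x y => min (g x) (g y), fun x y => min_comm _ _⟩ s

/-- upper endpoint of the interval of an edge -/
noncomputable def sepHi {V : Type*} (g : V → ℝ) (s : Sym2 V) : ℝ :=
  Sym2.lift ⟨fun x y => max (g x) (g y), fun x y => max_comm _ _⟩ s

@[simp] lemma sepLo_mk {V : Type*} (g : V → ℝ) (x y : V) :
    sepLo g s(x, y) = min (g x) (g y) := rfl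

@[simp] lemma sepHi_mk {V : Type*} (g : V → ℝ) (x y : V) :
    sepHi g s(x, y) = max (g x) (g y) := rfl

lemma sepLo_le_sepHi {V : Type*} (g : V → ℝ) (s : Sym2 V) : sepLo g s ≤ sepHi g s := by
  induction s using Sym2.ind with
  | _ x y => simp [min_le_iff, le_max_iff, le_refl, true_or, le_total]

lemma sepLo_le_of_mem {V : Type*} (g : V → ℝ) {s : Sym2 V} {v : V} (hv : v ∈ s) :
    sepLo g s ≤ g v ∧ g v ≤ sepHi g s := by
  induction s using Sym2.ind with
  | _ x y =>
    rw [Sym2.mem_iff] at hv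
    rcases hv with rfl | rfl
    · exact ⟨by simp [min_le_left], by simp [le_max_left]⟩
    · exact ⟨by simp [min_le_right], by simp [le_max_right]⟩

/-- the "separation" graph of an injection `g : V → ℝ`: two edges of `G` are adjacent
iff their intervals are disjoint (one strictly before the other). -/
noncomputable def sepGraph {V : Type*} (G : SimpleGraph V) (g : V → ℝ) :
    SimpleGraph G.edgeSet :=
  SimpleGraph.fromRel (fun e f => sepHi g (e : Sym2 V) < sepLo g (f : Sym2 V))

lemma sepGraph_adj {V : Type*} (G : SimpleGraph V) (g : V → ℝ) (e f : G.edgeSet) :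
    (sepGraph G g).Adj e f ↔ e ≠ f ∧
      (sepHi g (e : Sym2 V) < sepLo g (f : Sym2 V) ∨
       sepHi g (f : Sym2 V) < sepLo g (e : Sym2 V)) :=
  SimpleGraph.fromRel_adj _ e f

lemma sepGraph_le {V : Type*} (G : SimpleGraph V) (g : V → ℝ) :
    sepGraph G g ≤ (G.lineGraph)ᶜ := by
  intro e f h
  rw [sepGraph_adj] at h
  obtain ⟨hne, hsep⟩ := h
  rw [SimpleGraph.compl_adj]
  refine ⟨hne, fun hadj => ?_⟩
  rw [SimpleGraph.lineGraph_adj_iff_exists] at hadj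
  obtain ⟨-, v, hv1, hv2⟩ := hadj
  have h1 := sepLo_le_of_mem g hv1
  have h2 := sepLo_le_of_mem g hv2
  rcases hsep with h | h <;> linarith [h1.1, h1.2, h2.1, h2.2]

lemma sepGraph_isIntervalOrderGraph {V : Type*} (G : SimpleGraph V) (g : V → ℝ) :
    (sepGraph G g).IsIntervalOrderGraph := by
  refine ⟨fun e => Set.Icc (sepLo g (e : Sym2 V)) (sepHi g (e : Sym2 V)), fun e =>
    ⟨_, _, sepLo_le_sepHi g _, rfl⟩, fun e f hne => ?_⟩
  have h1 := sepLo_le_sepHi g (e : Sym2 V)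
  have h2 := sepLo_le_sepHi g (f : Sym2 V)
  rw [SimpleGraph.compl_adj, sepGraph_adj]
  constructor
  · rintro ⟨-, hn⟩
    have hP : ¬(sepHi g (e : Sym2 V) < sepLo g (f : Sym2 V) ∨
        sepHi g (f : Sym2 V) < sepLo g (e : Sym2 V)) := fun hp => hn ⟨hne, hp⟩
    push_neg at hP
    rw [Set.Icc_inter_Icc, Set.nonempty_Icc]
    simp only [max_le_iff, le_min_iff]
    exact ⟨⟨h1, hP.1⟩, hP.2, h2⟩
  · intro hN
    obtain ⟨x, hx⟩ := hN
    simp only [Set.mem_inter_iff, Set.mem_Icc] at hx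
    refine ⟨hne, ?_⟩
    rintro ⟨-, h | h⟩ <;> linarith [hx.1.1, hx.1.2, hx.2.1, hx.2.2]


/-- If `H` is a (spanning) subgraph of the complement of the line graph of `G` with `k` edges,
then some interval-order subgraph of the complement of `L(G)` contains at least `k/3` of the
edges of `H`. -/
theorem exists_intervalOrder_subgraph_covering_third
    {V : Type*} [Fintype V] (G : SimpleGraph V) (H : SimpleGraph G.edgeSet) (k : ℕ)
    (hle : H ≤ (G.lineGraph)ᶜ) (hk : H.edgeSet.ncard = k) :
    ∃ C : SimpleGraph G.edgeSet, C ≤ (G.lineGraph)ᶜ ∧ C.IsIntervalOrderGraph ∧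
      (k : ℝ) / 3 ≤ ((H.edgeSet ∩ C.edgeSet).ncard : ℝ) := by
  classical
  obtain ⟨w, hw⟩ : ∃ w : V → ℝ, Function.Injective w := by
    refine ⟨fun v => ((Fintype.equivFin V v : ℕ) : ℝ), ?_⟩
    intro x y hxy
    exact (Fintype.equivFin V).injective (Fin.val_injective (Nat.cast_injective hxy))
  set D : Equiv.Perm V → SimpleGraph G.edgeSet := fun σ => sepGraph G (fun v => w (σ v))
    with hD_def
  -- per-edge counting
  have key : ∀ p ∈ H.edgeSet, Fintype.card (Equiv.Perm V)
      = 3 * (univ.filter fun σ : Equiv.Perm V => p ∈ (D σ).edgeSet).card := by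
    intro p hp
    induction p using Sym2.ind with
    | _ e f =>
    have hHadj : H.Adj e f := (SimpleGraph.mem_edgeSet H).mp hp
    have hcl := hle hHadj
    rw [SimpleGraph.compl_adj] at hcl
    obtain ⟨hef, hnadj⟩ := hcl
    have hnshare : ∀ v : V, ¬(v ∈ (e : Sym2 V) ∧ v ∈ (f : Sym2 V)) := by
      intro v hv
      exact hnadj (SimpleGraph.lineGraph_adj_iff_exists.mpr ⟨hef, v, hv.1, hv.2⟩)
    obtain ⟨a, b, habe⟩ : ∃ x y, (e : Sym2 V) = s(x, y) :=
      Sym2.ind (fun x y => ⟨x, y, rfl⟩) (e : Sym2 V)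
    obtain ⟨c, d, hcdf⟩ : ∃ x y, (f : Sym2 V) = s(x, y) :=
      Sym2.ind (fun x y => ⟨x, y, rfl⟩) (f : Sym2 V)
    have hGab : G.Adj a b := by
      have := e.prop; rw [habe] at this; exact (SimpleGraph.mem_edgeSet G).mp this
    have hGcd : G.Adj c d := by
      have := f.prop; rw [hcdf] at this; exact (SimpleGraph.mem_edgeSet G).mp this
    have hmema : a ∈ (e : Sym2 V) := by rw [habe]; exact Sym2.mem_mk_left a b
    have hmemb : b ∈ (e : Sym2 V) := by rw [habe]; exact Sym2.mem_mk_right a b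
    have hmemc : c ∈ (f : Sym2 V) := by rw [hcdf]; exact Sym2.mem_mk_left c d
    have hmemd : d ∈ (f : Sym2 V) := by rw [hcdf]; exact Sym2.mem_mk_right c d
    have hab : a ≠ b := hGab.ne
    have hcd : c ≠ d := hGcd.ne
    have hac : a ≠ c := fun h => hnshare a ⟨hmema, h ▸ hmemc⟩
    have had : a ≠ d := fun h => hnshare a ⟨hmema, h ▸ hmemd⟩
    have hbc : b ≠ c := fun h => hnshare b ⟨hmemb, h ▸ hmemc⟩
    have hbd : b ≠ d := fun h => hnshare b ⟨hmemb, h ▸ hmemd⟩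
    have hmem_iff : ∀ σ : Equiv.Perm V, (s(e, f) ∈ (D σ).edgeSet) ↔
        (max (w (σ a)) (w (σ b)) < min (w (σ c)) (w (σ d)) ∨
         max (w (σ c)) (w (σ d)) < min (w (σ a)) (w (σ b))) := by
      intro σ
      rw [SimpleGraph.mem_edgeSet, hD_def]
      rw [sepGraph_adj, habe, hcdf]
      simp only [sepLo_mk, sepHi_mk]
      constructor
      · rintro ⟨-, h⟩; tauto
      · intro h; exact ⟨hef, by tauto⟩
    have hfeq : (univ.filter fun σ : Equiv.Perm V => s(e, f) ∈ (D σ).edgeSet)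
        = univ.filter (fun σ : Equiv.Perm V =>
          max (w (σ a)) (w (σ b)) < min (w (σ c)) (w (σ d)) ∨
          max (w (σ c)) (w (σ d)) < min (w (σ a)) (w (σ b))) := by
      apply Finset.filter_congr
      intro σ _
      exact hmem_iff σ
    rw [hfeq]
    exact count_sep_perms w hw a b c d hab hac had hbc hbd hcd
  -- express ncard via finsets
  have hHfin : H.edgeSet.Finite := Set.toFinite _
  set sH : Finset (Sym2 G.edgeSet) := hHfin.toFinset with hsH_def
  have hsH_card : sH.card = k := by
    rw [hsH_def, ← Set.ncard_eq_toFinset_card _ hHfin, hk]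
  set m : Equiv.Perm V → ℕ := fun σ => (H.edgeSet ∩ (D σ).edgeSet).ncard with hm_def
  have hm : ∀ σ, m σ = (sH.filter (fun p => p ∈ (D σ).edgeSet)).card := by
    intro σ
    have hset : H.edgeSet ∩ (D σ).edgeSet
        = ↑(sH.filter (fun p => p ∈ (D σ).edgeSet)) := by
      ext p
      simp only [Set.mem_inter_iff, Finset.coe_filter, Set.mem_setOf_eq, hsH_def,
        Set.Finite.mem_toFinset]
    rw [hm_def]
    simp only [hset, Set.ncard_coe_finset]
  -- double counting
  have hsum : ∑ σ : Equiv.Perm V, 3 * m σ = k * Fintype.card (Equiv.Perm V) := by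
    calc ∑ σ : Equiv.Perm V, 3 * m σ
        = ∑ σ : Equiv.Perm V, ∑ p ∈ sH, (if p ∈ (D σ).edgeSet then 3 else 0) := by
          refine Finset.sum_congr rfl fun σ _ => ?_
          rw [hm σ, Finset.card_filter, Finset.mul_sum]
          refine Finset.sum_congr rfl fun p _ => ?_
          split <;> simp
      _ = ∑ p ∈ sH, ∑ σ : Equiv.Perm V, (if p ∈ (D σ).edgeSet then 3 else 0) :=
          Finset.sum_comm
      _ = ∑ p ∈ sH, Fintype.card (Equiv.Perm V) := by
          refine Finset.sum_congr rfl fun p hp => ?_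
          have hp' : p ∈ H.edgeSet := by
            rw [hsH_def] at hp; exact (Set.Finite.mem_toFinset _).mp hp
          rw [key p hp']
          rw [Finset.card_filter, Finset.mul_sum]
          refine Finset.sum_congr rfl fun σ _ => ?_
          split <;> simp
      _ = k * Fintype.card (Equiv.Perm V) := by
          rw [Finset.sum_const, smul_eq_mul, hsH_card]
  have hexists : ∃ σ : Equiv.Perm V, k ≤ 3 * m σ := by
    by_contra hcon
    push_neg at hcon
    have hne : (univ : Finset (Equiv.Perm V)).Nonempty := ⟨1, mem_univ 1⟩
    have hlt : ∑ σ : Equiv.Perm V, 3 * m σ < ∑ _σ : Equiv.Perm V, k :=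
      Finset.sum_lt_sum_of_nonempty hne (fun σ _ => hcon σ)
    rw [hsum, Finset.sum_const, smul_eq_mul, Finset.card_univ, mul_comm] at hlt
    exact lt_irrefl _ hlt
  obtain ⟨σ, hσ⟩ := hexists
  refine ⟨D σ, sepGraph_le G _, sepGraph_isIntervalOrderGraph G _, ?_⟩
  have h3 : (k : ℝ) ≤ 3 * ((H.edgeSet ∩ (D σ).edgeSet).ncard : ℝ) := by
    have := hσ
    rw [hm_def] at this
    exact_mod_cast this
  linarith
end
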